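/- arXiv:1505.06094 — 5 statements merged into one kernel-verified Lean document; each statement's English description precedes it below -/
import Mathlib

section
/- Let w be a word of length n over an alphabet, having periods γ and ρ with ρ ≤ γ ≤ n. If n ≥ γ + ρ − gcd(γ,ρ), then w has period gcd(γ,ρ). -/
/-- A word `w` of length `n` (with letters `w 0, w 1, ..., w (n-1)` in an alphabet `S`)
has period `p` if `w i = w (i + p)` whenever both positions lie in the word. -/
def HasPeriod {S : Type*} (w : ℕ → S) (n p : ℕ) : Prop :=
  ∀ i, i + p < n → w i = w (i + p)

lemma hasPeriod_iter {S : Type*} {w : ℕ → S} {m g : ℕ} (h : HasPeriod w m g) :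
    ∀ k j, j + k * g < m → w j = w (j + k * g) := by
  intro k
  induction k with
  | zero => simp
  | succ k ih =>
    intro j hj
    have hkg : (k + 1) * g = k * g + g := by ring
    have h1 : j + g < m := by omega
    have h2 : w j = w (j + g) := h j h1
    have h3 : w (j + g) = w (j + g + k * g) := ih (j + g) (by omega)
    rw [h2, h3]
    congr 1
    omega

theorem fineWilf : ∀ γ : ℕ, ∀ {S : Type*} (w : ℕ → S) (n ρ : ℕ),
    1 ≤ ρ → ρ ≤ γ → γ ≤ n → HasPeriod w n γ → HasPeriod w n ρ →
    γ + ρ - Nat.gcd γ ρ ≤ n → HasPeriod w n (Nat.gcd γ ρ) := by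
  intro γ
  induction γ using Nat.strong_induction_on with
  | _ γ IH =>
    intro S w n ρ hρ hργ hγn hwγ hwρ hlen
    rcases eq_or_lt_of_le hργ with heq | hlt
    · subst heq
      rw [Nat.gcd_self]
      exact hwγ
    -- ρ < γ
    set g := Nat.gcd γ ρ with hgdef
    have hgρ : g ∣ ρ := Nat.gcd_dvd_right γ ρ
    have hgγ : g ∣ γ := Nat.gcd_dvd_left γ ρ
    have hgleρ : g ≤ ρ := Nat.le_of_dvd hρ hgρ
    set γ' := γ - ρ with hγ'def
    have hγ'1 : 1 ≤ γ' := by omega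
    have hgγ' : g ∣ γ' := Nat.dvd_sub hgγ hgρ
    have hgleγ' : g ≤ γ' := Nat.le_of_dvd hγ'1 hgγ'
    have hn2ρ : 2 * ρ ≤ n := by omega
    set m := n - ρ with hmdef
    have hρm : ρ ≤ m := by omega
    -- prefix of length m has periods ρ and γ'
    have hpρ : HasPeriod w m ρ := fun i hi => hwρ i (by omega)
    have hpγ' : HasPeriod w m γ' := by
      intro i hi
      have h1 : w i = w (i + γ) := hwγ i (by omega)
      have h2 : w (i + γ') = w (i + γ' + ρ) := hwρ (i + γ') (by omega)
      rw [h1, h2]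
      congr 1
      omega
    have hgcd' : Nat.gcd γ' ρ = g := Nat.gcd_sub_self_left hργ
    -- prefix has period g, by IH (apply with the larger of γ', ρ first)
    have hpg : HasPeriod w m g := by
      rcases le_total ρ γ' with hc | hc
      · have := IH γ' (by omega) w m ρ hρ hc (by omega) hpγ' hpρ (by omega)
        rwa [hgcd'] at this
      · have hgcd'' : Nat.gcd ρ γ' = g := by rw [Nat.gcd_comm, hgcd']
        have := IH ρ (by omega) w m γ' hγ'1 hc (by omega) hpρ hpγ'
          (by rw [hgcd'']; omega)
        rwa [hgcd''] at this
    -- extend period g from the prefix to the whole word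
    intro i hi
    induction i using Nat.strong_induction_on with
    | _ i IHi =>
      by_cases h1 : i + g < m
      · exact hpg i h1
      push_neg at h1
      by_cases h2 : ρ ≤ i
      · -- step back by ρ
        have e1 : w (i - ρ) = w (i - ρ + ρ) := hwρ (i - ρ) (by omega)
        have e2 : w (i + g - ρ) = w (i + g - ρ + ρ) := hwρ (i + g - ρ) (by omega)
        have e3 : w (i - ρ) = w (i - ρ + g) := IHi (i - ρ) (by omega) (by omega)
        have hir : i - ρ + ρ = i := by omega
        have hir2 : i + g - ρ + ρ = i + g := by omega
        have hir3 : i - ρ + g = i + g - ρ := by omega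
        rw [hir] at e1
        rw [hir2] at e2
        rw [hir3] at e3
        rw [← e1, e3, e2]
      · push_neg at h2
        -- i < ρ ≤ m, and i + g ≥ m ≥ ρ
        have e1 : w (i + g - ρ) = w (i + g - ρ + ρ) := hwρ (i + g - ρ) (by omega)
        have hir2 : i + g - ρ + ρ = i + g := by omega
        rw [hir2] at e1
        obtain ⟨c, hc⟩ := hgρ
        have hc' : ρ = c * g := by rw [hc, Nat.mul_comm]
        have hc1 : 1 ≤ c := Nat.pos_of_ne_zero (by rintro rfl; simp at hc; omega)
        have hge : g ≤ c * g := Nat.le_mul_of_pos_left g hc1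
        have hkg : (c - 1) * g + g = ρ := by
          rw [Nat.sub_mul, one_mul]
          omega
        have e2 : w (i + g - ρ) = w (i + g - ρ + (c - 1) * g) :=
          hasPeriod_iter hpg (c - 1) (i + g - ρ) (by omega)
        have hir3 : i + g - ρ + (c - 1) * g = i := by omega
        rw [hir3] at e2
        rw [← e2, e1]

/-- **Fine–Wilf theorem**: if a word of length `n` has periods `ρ ≤ γ ≤ n` and
`n ≥ γ + ρ - gcd(γ, ρ)`, then it has period `gcd(γ, ρ)`. -/
theorem hasPeriod_gcd_of_hasPeriod_of_hasPeriod {S : Type*} (w : ℕ → S) (n γ ρ : ℕ)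
    (hρ : 1 ≤ ρ) (hργ : ρ ≤ γ) (hγn : γ ≤ n)
    (hwγ : HasPeriod w n γ) (hwρ : HasPeriod w n ρ)
    (hlen : γ + ρ - Nat.gcd γ ρ ≤ n) :
    HasPeriod w n (Nat.gcd γ ρ) := by
  exact fineWilf γ w n ρ hρ hργ hγn hwγ hwρ hlen
end

section
/- Let w be a word over an alphabet, let w₁ be an initial segment of w having period γ, and let w₂ be a terminal segment of w having period ρ. If, as occurrences inside w, the segments w₁ and w₂ intersect in a segment u with ℓ(u) ≥ γ + ρ − gcd(γ,ρ), then w has period gcd(γ,ρ). -/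
/-- The segment of the word `w` occupying positions `lo, lo+1, ..., hi-1` has period `p`:
`w i = w (i + p)` whenever both positions lie in the segment. -/
def HasPeriodOn {S : Type*} (w : ℕ → S) (lo hi p : ℕ) : Prop :=
  ∀ i, lo ≤ i → i + p < hi → w i = w (i + p)

section Aux

variable {S : Type*} (w : ℕ → S)

lemma hpo_mul {lo hi g : ℕ} (h : HasPeriodOn w lo hi g) :
    ∀ k x, lo ≤ x → x + g * k < hi → w x = w (x + g * k) := by
  intro k
  induction k with
  | zero => intro x _ _; simp
  | succ k ih =>
    intro x hx hlt
    have e : x + g * (k + 1) = x + g * k + g := by ring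
    rw [e] at hlt ⊢
    calc w x = w (x + g * k) := ih x hx (by omega)
    _ = w (x + g * k + g) := h _ (by omega) hlt

lemma hpo_steps {lo hi g x y : ℕ} (h : HasPeriodOn w lo hi g) (hx : lo ≤ x)
    (hxy : x ≤ y) (hy : y < hi) (hd : g ∣ y - x) : w x = w y := by
  obtain ⟨k, hk⟩ := hd
  have e : y = x + g * k := by omega
  rw [e]
  exact hpo_mul w h k x hx (by omega)

lemma extend_left {s j γ g : ℕ} (hγ1 : 1 ≤ γ) (hdvd : g ∣ γ)
    (hsj : s + γ ≤ j) (h1 : HasPeriodOn w 0 j γ) (h2 : HasPeriodOn w s j g) :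
    HasPeriodOn w 0 j g := by
  have hgγ : g ≤ γ := Nat.le_of_dvd (by omega) hdvd
  have aux : ∀ m a, a + g < j → s ≤ a + m * γ → w a = w (a + g) := by
    intro m
    induction m with
    | zero => intro a h hs; exact h2 a (by omega) h
    | succ m ih =>
      intro a hag hs
      by_cases hsa : s ≤ a
      · exact h2 a hsa hag
      · push_neg at hsa
        have haγ : a + γ < j := by omega
        have e1 : w a = w (a + γ) := h1 a (Nat.zero_le _) haγ
        by_cases hc : a + g + γ < j
        · have e2 : w (a + g) = w (a + g + γ) := h1 _ (Nat.zero_le _) hc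
          have e3 : w (a + γ) = w (a + γ + g) := by
            apply ih (a + γ) (by omega)
            have e : a + (m + 1) * γ = (a + γ) + m * γ := by ring
            omega
          rw [e1, e3, e2]
          congr 1
          omega
        · push_neg at hc
          have hsag : s ≤ a + g := by omega
          have e2 : w (a + g) = w (a + γ) := by
            apply hpo_steps w h2 hsag (by omega) haγ
            have e : (a + γ) - (a + g) = γ - g := by omega
            rw [e]
            exact Nat.dvd_sub hdvd dvd_rfl
          rw [e1, e2]
  intro a _ hag
  exact aux s a hag (by nlinarith)

lemma extend_right {i t n ρ g : ℕ} (hρ1 : 1 ≤ ρ) (hdvd : g ∣ ρ)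
    (hit : i + ρ ≤ t) (h1 : HasPeriodOn w i n ρ) (h2 : HasPeriodOn w i t g) :
    HasPeriodOn w i n g := by
  have hgρ : g ≤ ρ := Nat.le_of_dvd (by omega) hdvd
  have aux : ∀ m a, i ≤ a → a + g < n → a + g < t + m * ρ → w a = w (a + g) := by
    intro m
    induction m with
    | zero => intro a hia hn ht; exact h2 a hia (by omega)
    | succ m ih =>
      intro a hia hn ht
      by_cases hcase : a + g < t + m * ρ
      · exact ih a hia hn hcase
      · push_neg at hcase
        have hmρ : t ≤ t + m * ρ := by omega
        have hiρ : i + ρ ≤ a + g := by omega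
        have e2 : w (a + g - ρ) = w (a + g) := by
          have h := h1 (a + g - ρ) (by omega) (by omega)
          rwa [Nat.sub_add_cancel (by omega)] at h
        by_cases hiρa : i + ρ ≤ a
        · have e1 : w (a - ρ) = w a := by
            have h := h1 (a - ρ) (by omega) (by omega)
            rwa [Nat.sub_add_cancel (by omega)] at h
          have e3 : w (a - ρ) = w (a - ρ + g) := by
            apply ih (a - ρ) (by omega) (by omega)
            have e : t + (m + 1) * ρ = t + m * ρ + ρ := by ring
            omega
          have e4 : a - ρ + g = a + g - ρ := by omega
          rw [← e1, e3, e4, e2]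
        · push_neg at hiρa
          have e3 : w (a + g - ρ) = w a := by
            apply hpo_steps w h2 (by omega) (by omega) (by omega)
            have e : a - (a + g - ρ) = ρ - g := by omega
            rw [e]
            exact Nat.dvd_sub hdvd dvd_rfl
          rw [← e3, e2]
  intro a hia hag
  apply aux n a hia hag
  have : n ≤ n * ρ := Nat.le_mul_of_pos_right n (by omega)
  omega

lemma fine_wilf : ∀ N γ ρ i j, γ + ρ ≤ N → 1 ≤ γ → 1 ≤ ρ →
    HasPeriodOn w i j γ → HasPeriodOn w i j ρ → γ + ρ - Nat.gcd γ ρ ≤ j - i →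
    HasPeriodOn w i j (Nat.gcd γ ρ) := by
  intro N
  induction N with
  | zero => intro γ ρ i j hN hγ _ _ _ _; omega
  | succ N ih =>
    intro γ ρ i j hN hγ1 hρ1 hγ hρ hlen
    have hgγ : Nat.gcd γ ρ ∣ γ := Nat.gcd_dvd_left γ ρ
    have hgρ : Nat.gcd γ ρ ∣ ρ := Nat.gcd_dvd_right γ ρ
    have hg1 : 1 ≤ Nat.gcd γ ρ := Nat.gcd_pos_of_pos_left ρ (by omega)
    have hgleγ : Nat.gcd γ ρ ≤ γ := Nat.le_of_dvd (by omega) hgγ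
    have hgleρ : Nat.gcd γ ρ ≤ ρ := Nat.le_of_dvd (by omega) hgρ
    rcases lt_trichotomy γ ρ with hlt | heq | hgt
    · -- ρ > γ : reduce to (γ, ρ - γ)
      have hgcd : Nat.gcd γ (ρ - γ) = Nat.gcd γ ρ := by
        conv_rhs => rw [show ρ = (ρ - γ) + γ by omega]
        rw [Nat.gcd_add_self_right]
      have hdγ : Nat.gcd γ ρ ∣ ρ - γ := Nat.dvd_sub hgρ hgγ
      have hγρg : γ + Nat.gcd γ ρ ≤ ρ := by
        have : Nat.gcd γ ρ ≤ ρ - γ := Nat.le_of_dvd (by omega) hdγ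
        omega
      have hsub : HasPeriodOn w i (j - γ) (ρ - γ) := by
        intro x hx hxl
        have hxρ : x + ρ < j := by omega
        have e1 : w x = w (x + ρ) := hρ x hx hxρ
        have e2 : w (x + (ρ - γ)) = w (x + ρ) := by
          have h := hγ (x + (ρ - γ)) (by omega) (by omega)
          rwa [show x + (ρ - γ) + γ = x + ρ by omega] at h
        rw [e1, e2]
      have hγsub : HasPeriodOn w i (j - γ) γ := fun x hx hxl => hγ x hx (by omega)
      have hcore : HasPeriodOn w i (j - γ) (Nat.gcd γ ρ) := by
        have := ih γ (ρ - γ) i (j - γ) (by omega) hγ1 (by omega) hγsub hsub (by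
          rw [hgcd]; omega)
        rwa [hgcd] at this
      exact extend_right w hγ1 hgγ (by omega) hγ hcore
    · subst heq
      rw [Nat.gcd_self]
      exact hγ
    · -- γ > ρ : reduce to (γ - ρ, ρ)
      have hgcd : Nat.gcd (γ - ρ) ρ = Nat.gcd γ ρ := by
        conv_rhs => rw [show γ = (γ - ρ) + ρ by omega]
        rw [Nat.gcd_add_self_left]
      have hdρ : Nat.gcd γ ρ ∣ γ - ρ := Nat.dvd_sub hgγ hgρ
      have hρg : ρ + Nat.gcd γ ρ ≤ γ := by
        have : Nat.gcd γ ρ ≤ γ - ρ := Nat.le_of_dvd (by omega) hdρ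
        omega
      have hsub : HasPeriodOn w i (j - ρ) (γ - ρ) := by
        intro x hx hxl
        have hxγ : x + γ < j := by omega
        have e1 : w x = w (x + γ) := hγ x hx hxγ
        have e2 : w (x + (γ - ρ)) = w (x + γ) := by
          have h := hρ (x + (γ - ρ)) (by omega) (by omega)
          rwa [show x + (γ - ρ) + ρ = x + γ by omega] at h
        rw [e1, e2]
      have hρsub : HasPeriodOn w i (j - ρ) ρ := fun x hx hxl => hρ x hx (by omega)
      have hcore : HasPeriodOn w i (j - ρ) (Nat.gcd γ ρ) := by
        have := ih (γ - ρ) ρ i (j - ρ) (by omega) (by omega) hρ1 hsub hρsub (by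
          rw [hgcd]; omega)
        rwa [hgcd] at this
      exact extend_right w hρ1 hgρ (by omega) hρ hcore

end Aux

/-- Let `w` be a word of length `n` (with letters `w 0, ..., w (n-1)`), let its initial
segment occupying positions `[0, j)` have period `γ`, and let its terminal segment occupying
positions `[i, n)` have period `ρ`.  If the two segments intersect (as occurrences in `w`)
in a segment of length `j - i ≥ γ + ρ - gcd(γ, ρ)`, then `w` has period `gcd(γ, ρ)`. -/
theorem hasPeriodOn_gcd_of_initial_of_terminal {S : Type*} (w : ℕ → S) (n i j γ ρ : ℕ)
    (hij : i ≤ j) (hjn : j ≤ n)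
    (hγ : 1 ≤ γ) (hγj : γ ≤ j)
    (hρ : 1 ≤ ρ) (hρn : ρ ≤ n - i)
    (hper₁ : HasPeriodOn w 0 j γ)
    (hper₂ : HasPeriodOn w i n ρ)
    (hu : γ + ρ - Nat.gcd γ ρ ≤ j - i) :
    HasPeriodOn w 0 n (Nat.gcd γ ρ) := by
  set g := Nat.gcd γ ρ with hg
  have hgγ : g ∣ γ := Nat.gcd_dvd_left γ ρ
  have hgρ : g ∣ ρ := Nat.gcd_dvd_right γ ρ
  have hgleγ : g ≤ γ := Nat.le_of_dvd (by omega) hgγ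
  have hgleρ : g ≤ ρ := Nat.le_of_dvd (by omega) hgρ
  have hγov : HasPeriodOn w i j γ := fun x hx h => hper₁ x (Nat.zero_le _) h
  have hρov : HasPeriodOn w i j ρ := fun x hx h => hper₂ x hx (by omega)
  have hcore : HasPeriodOn w i j g :=
    fine_wilf w (γ + ρ) γ ρ i j le_rfl hγ hρ hγov hρov hu
  have hleft : HasPeriodOn w 0 j g :=
    extend_left w hγ hgγ (by omega) hper₁ hcore
  have hright : HasPeriodOn w i n g :=
    extend_right w hρ hgρ (by omega) hper₂ hcore
  intro a _ hag
  by_cases h : a + g < j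
  · exact hleft a (Nat.zero_le _) h
  · exact hright a (by omega) hag
end

section
/- Suppose W is a cyclically reduced word in S* of the form x₁V₁y₁V₁⁻¹ = z₀z₁⋯z_{2k−1}, for some letters x₁, y₁ ∈ S and some word V₁, where ℓ(W) = 2k. Suppose also that for some j with j ≢ 0 (mod k), the cyclic permutation z_jz_{j+1}⋯z_{2k−1}z₀⋯z_{j−1} of W is identically equal to x₂V₂y₂V₂⁻¹ for some letters x₂, y₂ ∈ S and some word V₂. Then one of the following holds: (1) {x₁, y₁} = {x₂, y₂} and W ≡ ∏_{t=1}^{s} x₁^{α(t)} V₃ y₁^{β(t)} V₃⁻¹ for some odd integer s > 1, some word V₃, and some α(t), β(t) ∈ {±1} for each t; (2) y₁ = x₁⁻¹, y₂ = x₂⁻¹, and W ≡ ∏_{t=1}^{s} x₁^{α(t)} V₃ x₂^{β(t)} V₃⁻¹ for some even integer s > 0, some word V₃, and some α(t), β(t) ∈ {±1} for each t. -/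
namespace FreeMonoidInvolution

variable {S : Type*}

/-- The involute `V⁻¹` of a word `V` over an alphabet with involution `σ`. -/
def invol (σ : S → S) (V : List S) : List S := (V.map σ).reverse

/-- `x^ε` for `ε = ±1`: `x` itself if `ε = 1`, and the involute `σ x` otherwise. -/
def epow (σ : S → S) (x : S) (ε : ℤ) : S := if ε = 1 then x else σ x

/-- A word `z₀z₁⋯z_{n-1}` is reduced if `z_{i+1} ≠ z_i⁻¹` for all `i`, and cyclically
reduced if moreover `z₀ ≠ z_{n-1}⁻¹`. -/
def CyclicallyReduced (σ : S → S) (W : List S) : Prop :=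
  W.Chain' (fun u v => v ≠ σ u) ∧ ∀ x ∈ W.head?, ∀ y ∈ W.getLast?, x ≠ σ y

lemma invol_length (σ : S → S) (V : List S) : (invol σ V).length = V.length := by simp [invol]


def fcyc (L : List S) (d : S) (i : ℤ) : S := L.getD (i % (L.length : ℤ)).toNat d

lemma fcyc_congr (L : List S) (d : S) {i i' : ℤ}
    (h : i % (L.length : ℤ) = i' % (L.length : ℤ)) : fcyc L d i = fcyc L d i' := by
  unfold fcyc; rw [h]

lemma fcyc_nat (L : List S) (d : S) (r : ℕ) (h : r < L.length) :
    fcyc L d r = L.getD r d := by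
  unfold fcyc
  have h0 : (0:ℤ) ≤ r := by positivity
  have : (r : ℤ) % (L.length : ℤ) = r := Int.emod_eq_of_lt h0 (by exact_mod_cast h)
  rw [this]; simp

lemma fcyc_period (L : List S) (d : S) (i c : ℤ) :
    fcyc L d (i + (L.length : ℤ) * c) = fcyc L d i := by
  apply fcyc_congr
  exact Int.add_mul_emod_self_left i (L.length:ℤ) c

lemma fcyc_shift (L : List S) (d : S) {i i' c : ℤ} (h : i = i' + (L.length : ℤ) * c) :
    fcyc L d i = fcyc L d i' := by
  rw [h]; exact fcyc_period L d i' c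

section Struct
variable (σ : S → S) (x y d : S) (V : List S)

lemma struct_length : ([x] ++ V ++ [y] ++ invol σ V).length = 2*(V.length+1) := by
  simp [invol]; omega

lemma struct0 : ([x] ++ V ++ [y] ++ invol σ V).getD 0 d = x := rfl

lemma structV (t : ℕ) (ht : t < V.length) :
    ([x] ++ V ++ [y] ++ invol σ V).getD (1+t) d = V.getD t d := by
  rw [show [x] ++ V ++ [y] ++ invol σ V = [x] ++ (V ++ ([y] ++ invol σ V)) by simp,
    List.getD_append_right _ _ _ _ (by simp), List.getD_append]
  · simp
  · simpa using ht

lemma structMid : ([x] ++ V ++ [y] ++ invol σ V).getD (V.length+1) d = y := by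
  rw [show [x] ++ V ++ [y] ++ invol σ V = ([x] ++ V) ++ ([y] ++ invol σ V) by simp,
    List.getD_append_right _ _ _ _ (by simp)]
  simp

lemma structInv (t : ℕ) (ht : t < V.length) :
    ([x] ++ V ++ [y] ++ invol σ V).getD (V.length+2+t) d = σ (V.getD (V.length-1-t) d) := by
  rw [show [x] ++ V ++ [y] ++ invol σ V = ([x] ++ V ++ [y]) ++ invol σ V by simp,
    List.getD_append_right _ _ _ _ (by simp)]
  have h2 : V.length + 2 + t - ([x] ++ V ++ [y]).length = t := by simp
  rw [h2, invol]
  have h3 : t < (V.map σ).reverse.length := by simpa using ht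
  rw [List.getD_eq_getElem _ _ h3, List.getElem_reverse]
  rw [List.getElem_map]
  rw [List.getD_eq_getElem _ _ (by simp at h3 ⊢; omega)]
  congr 1
  simp

lemma key_nat (u : ℕ) (h1 : 1 ≤ u) (h2 : u ≤ V.length) :
    ([x] ++ V ++ [y] ++ invol σ V).getD (2*(V.length+1) - u) d
      = σ (([x] ++ V ++ [y] ++ invol σ V).getD u d) := by
  have e1 : 2*(V.length+1) - u = V.length + 2 + (V.length - u) := by omega
  have e2 : u = 1 + (u - 1) := by omega
  rw [e1, structInv σ x y d V _ (by omega)]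
  rw [show V.length - 1 - (V.length - u) = u - 1 by omega]
  conv_rhs => rw [e2, structV σ x y d V _ (by omega)]
end Struct

section Refl
variable (σ : S → S) (x y d : S) (V : List S) (k : ℕ)

lemma fcyc_zero : fcyc ([x] ++ V ++ [y] ++ invol σ V) d 0 = x := by
  have h := fcyc_nat ([x] ++ V ++ [y] ++ invol σ V) d 0 (by rw [struct_length]; omega)
  rw [show ((0:ℕ):ℤ) = (0:ℤ) by simp] at h
  rw [h, struct0]

lemma fcyc_mid (hk : V.length + 1 = k) :
    fcyc ([x] ++ V ++ [y] ++ invol σ V) d k = y := by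
  have h := fcyc_nat ([x] ++ V ++ [y] ++ invol σ V) d k (by rw [struct_length]; omega)
  rw [h, ← hk, structMid]

lemma fcyc_reflect (hσ : Function.Involutive σ) (hk : V.length + 1 = k) :
    ∀ i : ℤ, ¬((k:ℤ) ∣ i) →
    fcyc ([x] ++ V ++ [y] ++ invol σ V) d (-i) = σ (fcyc ([x] ++ V ++ [y] ++ invol σ V) d i) := by
  intro i hi
  set L := [x] ++ V ++ [y] ++ invol σ V with hLdef
  have hn : L.length = 2*k := by rw [hLdef, struct_length, hk]
  have hkpos : 0 < k := by omega
  have hn' : (L.length : ℤ) = 2*(k:ℤ) := by rw [hn]; push_cast; ring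
  have hnpos : (0:ℤ) < (L.length : ℤ) := by rw [hn']; positivity
  obtain ⟨r, hr⟩ : ∃ r : ℕ, (r:ℤ) = i % (L.length : ℤ) :=
    ⟨(i % (L.length : ℤ)).toNat, Int.toNat_of_nonneg (Int.emod_nonneg i (by omega))⟩
  have hrlt : r < 2*k := by
    have := Int.emod_lt_of_pos i hnpos
    rw [← hr, hn'] at this; exact_mod_cast this
  have hq : i = (r:ℤ) + (L.length:ℤ) * (i / (L.length:ℤ)) := by
    rw [hr]; rw [Int.emod_def]; ring
  have hkr : ¬ ((k:ℤ) ∣ (r:ℤ)) := by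
    intro hd
    apply hi
    have h3 : (k:ℤ) ∣ (L.length:ℤ) * (i / (L.length:ℤ)) := by
      rw [hn']; exact Dvd.dvd.mul_right ⟨2, by ring⟩ _
    rw [hq]; exact dvd_add hd h3
  have hr0 : r ≠ 0 := by intro h; rw [h] at hkr; exact hkr (by simp)
  have hrk : r ≠ k := by intro h; rw [h] at hkr; exact hkr (by simp)
  have fi : fcyc L d i = L.getD r d := by
    rw [fcyc_shift L d hq, fcyc_nat L d r (by omega)]
  have hcast : ((2*k - r:ℕ):ℤ) = 2*(k:ℤ) - r := by
    push_cast [Nat.cast_sub (le_of_lt hrlt)]; ring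
  have hq2 : -i = ((2*k - r:ℕ):ℤ) + (L.length:ℤ) * (-(i / (L.length:ℤ)) - 1) := by
    rw [hcast]
    linear_combination (-1) * hq + hn'
  have fni : fcyc L d (-i) = L.getD (2*k - r) d := by
    rw [fcyc_shift L d hq2, fcyc_nat L d _ (by omega)]
  have hm : V.length = k - 1 := by omega
  rcases lt_or_gt_of_ne hrk with hlt | hgt
  · -- 1 ≤ r ≤ k-1
    rw [fni, fi]
    have : 2*k - r = 2*(V.length+1) - r := by omega
    rw [this, key_nat σ x y d V r (by omega) (by omega)]
  · -- k+1 ≤ r ≤ 2k-1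
    rw [fni, fi]
    set u : ℕ := 2*k - r with hu
    have hru : r = 2*(V.length+1) - u := by omega
    rw [hru, key_nat σ x y d V u (by omega) (by omega), hσ]
end Refl

lemma ndvd_of_lt (s : ℕ) {a : ℤ} (h1 : 0 < a) (h2 : a < s) : ¬((s:ℤ) ∣ a) := fun hd =>
  absurd (Int.le_of_dvd h1 hd) (by omega)

lemma ndvd_of_lt2 (s : ℕ) {a : ℤ} (h1 : (s:ℤ) < a) (h2 : a < 2*s) : ¬((s:ℤ) ∣ a) := by
  intro hd
  have h3 : (s:ℤ) ∣ (a - s) := dvd_sub hd dvd_rfl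
  have := Int.le_of_dvd (by omega) h3
  omega

lemma core1 (σ : S → S) (hσ : Function.Involutive σ) (s : ℕ) (hs : 2 ≤ s) (Y : ℤ → S)
    (P : ∀ t u : ℤ, Y (t + 2*s*u) = Y t)
    (R0 : ∀ t : ℤ, ¬((s:ℤ) ∣ t) → Y (-t) = σ (Y t))
    (Rj : ∀ t : ℤ, ¬((s:ℤ) ∣ (t - 1)) → Y (2 - t) = σ (Y t)) :
    (∀ t : ℤ, Y (2*t) = Y 0 ∨ Y (2*t) = σ (Y 0)) ∧
    (∀ t : ℤ, Y (2*t+1) = Y 1 ∨ Y (2*t+1) = σ (Y 1)) ∧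
    (s % 2 = 1 → Y s = Y 1 ∧ Y (s+1) = Y 0) ∧
    (s % 2 = 0 → Y s = σ (Y 0) ∧ Y (s+1) = σ (Y 1)) := by
  have hinj := hσ.injective
  have U : ∀ t : ℤ, ¬((s:ℤ) ∣ t) → ¬((s:ℤ) ∣ (t+1)) → Y (t+2) = Y t := by
    intro t h1 h2
    have e1 := Rj (t+2) (by rw [show t+2-1 = t+1 by ring]; exact h2)
    have e2 := R0 t h1
    rw [show (2 - (t+2)) = -t by ring, e2] at e1
    exact (hinj e1).symm
  have C1 : ∀ t : ℕ, 1 ≤ t → t ≤ s →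
      (t % 2 = 0 → Y t = Y 2) ∧ (t % 2 = 1 → Y t = Y 1) := by
    intro t
    induction t using Nat.strong_induction_on with
    | _ t ih =>
      intro ht1 ht2
      by_cases h3 : t < 3
      · interval_cases t
        · exact ⟨fun h => by omega, fun _ => rfl⟩
        · exact ⟨fun _ => by norm_num, fun h => by omega⟩
      · have hstep : Y (((t-2:ℕ):ℤ) + 2) = Y ((t-2:ℕ):ℤ) :=
          U ((t-2:ℕ):ℤ) (ndvd_of_lt s (by omega) (by omega))
            (ndvd_of_lt s (by omega) (by omega))
        have hc : ((t:ℕ):ℤ) = ((t-2:ℕ):ℤ) + 2 := by push_cast; omega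
        obtain ⟨ih0, ih1⟩ := ih (t-2) (by omega) (by omega) (by omega)
        constructor
        · intro hp; rw [hc, hstep]; exact ih0 (by omega)
        · intro hp; rw [hc, hstep]; exact ih1 (by omega)
  have C2 : ∀ t : ℕ, s+1 ≤ t → t ≤ 2*s →
      ((t - (s+1)) % 2 = 0 → Y t = Y ((s:ℤ)+1)) ∧ ((t - (s+1)) % 2 = 1 → Y t = Y ((s:ℤ)+2)) := by
    intro t
    induction t using Nat.strong_induction_on with
    | _ t ih =>
      intro ht1 ht2
      by_cases h3 : t < s + 3
      · rcases (by omega : t = s + 1 ∨ t = s + 2) with rfl | rfl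
        · exact ⟨fun _ => by push_cast; norm_num, fun h => by omega⟩
        · exact ⟨fun h => by omega, fun _ => by push_cast; norm_num⟩
      · have hstep : Y (((t-2:ℕ):ℤ) + 2) = Y ((t-2:ℕ):ℤ) :=
          U ((t-2:ℕ):ℤ) (ndvd_of_lt2 s (by omega) (by omega))
            (ndvd_of_lt2 s (by omega) (by omega))
        have hc : ((t:ℕ):ℤ) = ((t-2:ℕ):ℤ) + 2 := by push_cast; omega
        obtain ⟨ih0, ih1⟩ := ih (t-2) (by omega) (by omega) (by omega)
        constructor
        · intro hp; rw [hc, hstep]; exact ih0 (by omega)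
        · intro hp; rw [hc, hstep]; exact ih1 (by omega)
  have D1 : Y 2 = σ (Y 0) := by
    have := Rj 0 (by rw [show (0:ℤ)-1 = -1 by ring]; intro hd; have := Int.le_of_dvd (by omega) (dvd_neg.mp hd); omega)
    simpa using this
  have D2 : Y ((s:ℤ)+2) = σ (Y (s:ℤ)) := by
    have h := Rj ((s:ℤ)+2) (by rw [show (s:ℤ)+2-1 = s+1 by ring]; exact ndvd_of_lt2 s (by omega) (by omega))
    rw [show 2 - ((s:ℤ)+2) = -s by ring] at h
    have hp : Y (-(s:ℤ) + 2*s*1) = Y (-s) := P (-s) 1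
    rw [show -(s:ℤ) + 2*s*1 = s by ring] at hp
    rw [hp, h, hσ]
  have D3 : Y (2*(s:ℤ)) = Y 0 := by
    have := P 0 1; rw [show (0:ℤ) + 2*s*1 = 2*s by ring] at this; exact this
  have D5 : Y (2*(s:ℤ) - 1) = σ (Y 1) := by
    have h := R0 1 (ndvd_of_lt s (by omega) (by omega))
    have hp : Y (-1 + 2*(s:ℤ)*1) = Y (-1) := P (-1) 1
    rw [show (-1:ℤ) + 2*s*1 = 2*s - 1 by ring] at hp
    exact hp.trans h
  -- reduction of arbitrary argument
  have RED : ∀ a : ℤ, ∃ r : ℕ, (r:ℤ) < 2*s ∧ Y a = Y r ∧ (2 ∣ a ↔ 2 ∣ (r:ℤ)) := by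
    intro a
    have hnpos : (0:ℤ) < 2*(s:ℤ) := by positivity
    obtain ⟨r, hr⟩ : ∃ r : ℕ, (r:ℤ) = a % (2*(s:ℤ)) :=
      ⟨(a % (2*(s:ℤ))).toNat, Int.toNat_of_nonneg (Int.emod_nonneg a (by omega))⟩
    refine ⟨r, by rw [hr]; exact Int.emod_lt_of_pos a hnpos, ?_, ?_⟩
    · have : a = (r:ℤ) + 2*(s:ℤ)*(a / (2*(s:ℤ))) := by rw [hr, Int.emod_def]; ring
      rw [this, P]
    · have h2s : (2:ℤ) ∣ 2*(s:ℤ)*(a / (2*(s:ℤ))) := ⟨(s:ℤ) * (a / (2*(s:ℤ))), by ring⟩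
      have heq : a = (r:ℤ) + 2*(s:ℤ)*(a / (2*(s:ℤ))) := by rw [hr, Int.emod_def]; ring
      constructor
      · intro hd
        rw [hr, Int.emod_def]
        exact dvd_sub hd h2s
      · intro hd
        rw [heq]
        exact dvd_add hd h2s
  rcases Nat.even_or_odd s with ⟨shalf, hsp⟩ | ⟨shalf, hsp⟩
  · -- s even
    have hsm : s % 2 = 0 := by omega
    have e1 : Y (s:ℤ) = σ (Y 0) := by
      have := (C1 s (by omega) le_rfl).1 hsm
      rw [this]; exact_mod_cast D1
    have e2 : Y ((s:ℤ)+2) = Y 0 := by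
      have h := (C2 (2*s) (by omega) le_rfl).2 (by omega)
      rw [show ((2*s:ℕ):ℤ) = 2*(s:ℤ) by push_cast; ring, D3] at h
      exact h.symm
    have e3 : Y ((s:ℤ)+1) = σ (Y 1) := by
      have h := (C2 (2*s-1) (by omega) (by omega)).1 (by omega)
      rw [show ((2*s-1:ℕ):ℤ) = 2*(s:ℤ) - 1 by push_cast [Nat.cast_sub (by omega : 1 ≤ 2*s)]; ring, D5] at h
      exact h.symm
    have EV : ∀ t : ℤ, Y (2*t) = Y 0 ∨ Y (2*t) = σ (Y 0) := by
      intro t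
      obtain ⟨r, hrlt, hYr, hpar⟩ := RED (2*t)
      have hre : (2:ℤ) ∣ (r:ℤ) := hpar.mp ⟨t, rfl⟩
      have hre' : r % 2 = 0 := by omega
      rcases (by omega : r = 0 ∨ (1 ≤ r ∧ r ≤ s) ∨ (s+1 ≤ r ∧ (r:ℤ) ≤ 2*s - 1)) with rfl | ⟨h1, h2⟩ | ⟨h1, h2⟩
      · left; rw [hYr]; norm_num
      · right; rw [hYr, (C1 r h1 h2).1 hre']; exact_mod_cast D1
      · left; rw [hYr]
        have h := (C2 r h1 (by omega)).2 (by omega)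
        rw [show ((r:ℕ):ℤ) = (r:ℤ) from rfl] at h
        rw [h]; exact e2
    have OD : ∀ t : ℤ, Y (2*t+1) = Y 1 ∨ Y (2*t+1) = σ (Y 1) := by
      intro t
      obtain ⟨r, hrlt, hYr, hpar⟩ := RED (2*t+1)
      have hre : ¬ ((2:ℤ) ∣ (r:ℤ)) := fun h => by
        have := hpar.mpr h; omega
      have hre' : r % 2 = 1 := by omega
      rcases (by omega : (1 ≤ r ∧ r ≤ s) ∨ (s+1 ≤ r ∧ (r:ℤ) ≤ 2*s - 1)) with ⟨h1, h2⟩ | ⟨h1, h2⟩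
      · left; rw [hYr]; exact (C1 r h1 h2).2 hre'
      · right; rw [hYr]
        have h := (C2 r h1 (by omega)).1 (by omega)
        rw [h]; exact e3
    exact ⟨EV, OD, fun h => by omega, fun _ => ⟨e1, e3⟩⟩
  · -- s odd
    have hsm : s % 2 = 1 := by omega
    have o1 : Y (s:ℤ) = Y 1 := (C1 s (by omega) le_rfl).2 hsm
    have o2 : Y ((s:ℤ)+1) = Y 0 := by
      have h := (C2 (2*s) (by omega) le_rfl).1 (by omega)
      rw [show ((2*s:ℕ):ℤ) = 2*(s:ℤ) by push_cast; ring, D3] at h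
      exact h.symm
    have o3 : Y ((s:ℤ)+2) = σ (Y 1) := by rw [D2, o1]
    have EV : ∀ t : ℤ, Y (2*t) = Y 0 ∨ Y (2*t) = σ (Y 0) := by
      intro t
      obtain ⟨r, hrlt, hYr, hpar⟩ := RED (2*t)
      have hre : (2:ℤ) ∣ (r:ℤ) := hpar.mp ⟨t, rfl⟩
      have hre' : r % 2 = 0 := by omega
      rcases (by omega : r = 0 ∨ (1 ≤ r ∧ r ≤ s) ∨ (s+1 ≤ r ∧ (r:ℤ) ≤ 2*s - 1)) with rfl | ⟨h1, h2⟩ | ⟨h1, h2⟩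
      · left; rw [hYr]; norm_num
      · right; rw [hYr, (C1 r h1 h2).1 hre']; exact_mod_cast D1
      · left; rw [hYr]
        have h := (C2 r h1 (by omega)).1 (by omega)
        rw [h]; exact o2
    have OD : ∀ t : ℤ, Y (2*t+1) = Y 1 ∨ Y (2*t+1) = σ (Y 1) := by
      intro t
      obtain ⟨r, hrlt, hYr, hpar⟩ := RED (2*t+1)
      have hre : ¬ ((2:ℤ) ∣ (r:ℤ)) := fun h => by
        have := hpar.mpr h; omega
      have hre' : r % 2 = 1 := by omega
      rcases (by omega : (1 ≤ r ∧ r ≤ s) ∨ (s+1 ≤ r ∧ (r:ℤ) ≤ 2*s - 1)) with ⟨h1, h2⟩ | ⟨h1, h2⟩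
      · left; rw [hYr]; exact (C1 r h1 h2).2 hre'
      · right; rw [hYr]
        have h := (C2 r h1 (by omega)).2 (by omega)
        rw [h]; exact o3
    exact ⟨EV, OD, fun _ => ⟨o1, o2⟩, fun h => by omega⟩


lemma assemble (σ : S → S) (f : ℤ → S) (g s k : ℕ) (hg : 0 < g) (hsg : s * g = k)
    (per : ∀ i c : ℤ, ¬((g:ℤ) ∣ i) → f (i + 2*(g:ℤ)*c) = f i)
    (reflg : ∀ i c : ℤ, ¬((g:ℤ) ∣ i) → f (2*(g:ℤ)*c - i) = σ (f i))
    (x' y' : S)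
    (hx : ∀ t : ℤ, f (2*t*(g:ℤ)) = x' ∨ f (2*t*(g:ℤ)) = σ x')
    (hy : ∀ t : ℤ, f ((2*t+1)*(g:ℤ)) = y' ∨ f ((2*t+1)*(g:ℤ)) = σ y') :
    ∃ (V₃ : List S) (α β : ℕ → ℤ), (∀ t, α t = 1 ∨ α t = -1) ∧ (∀ t, β t = 1 ∨ β t = -1) ∧
    ((List.range s).map fun t =>
      [epow σ x' (α t)] ++ V₃ ++ [epow σ y' (β t)] ++ invol σ V₃).flatten
      = (List.range (2*k)).map (fun u : ℕ => f (u:ℤ)) := by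
  classical
  refine ⟨(List.range (g-1)).map (fun u : ℕ => f ((u:ℤ)+1)),
    fun t => if f (2*(t:ℤ)*(g:ℤ)) = x' then 1 else -1,
    fun t => if f ((2*(t:ℤ)+1)*(g:ℤ)) = y' then 1 else -1,
    fun t => by dsimp only; split <;> simp, fun t => by dsimp only; split <;> simp, ?_⟩
  set F : ℕ → S := fun u : ℕ => f (u:ℤ) with hF
  have hxval : ∀ t : ℕ, epow σ x' (if f (2*(t:ℤ)*(g:ℤ)) = x' then (1:ℤ) else -1)
      = f (2*(t:ℤ)*(g:ℤ)) := by
    intro t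
    by_cases h : f (2*(t:ℤ)*(g:ℤ)) = x'
    · rw [if_pos h]; simp [epow, h]
    · rw [if_neg h]
      have h2 := (hx (t:ℤ)).resolve_left h
      simp [epow]; exact h2.symm
  have hyval : ∀ t : ℕ, epow σ y' (if f ((2*(t:ℤ)+1)*(g:ℤ)) = y' then (1:ℤ) else -1)
      = f ((2*(t:ℤ)+1)*(g:ℤ)) := by
    intro t
    by_cases h : f ((2*(t:ℤ)+1)*(g:ℤ)) = y'
    · rw [if_pos h]; simp [epow, h]
    · rw [if_neg h]
      have h2 := (hy (t:ℤ)).resolve_left h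
      simp [epow]; exact h2.symm
  have BLK : ∀ t : ℕ,
      [epow σ x' (if f (2*(t:ℤ)*(g:ℤ)) = x' then (1:ℤ) else -1)]
        ++ (List.range (g-1)).map (fun u : ℕ => f ((u:ℤ)+1))
        ++ [epow σ y' (if f ((2*(t:ℤ)+1)*(g:ℤ)) = y' then (1:ℤ) else -1)]
        ++ invol σ ((List.range (g-1)).map (fun u : ℕ => f ((u:ℤ)+1)))
      = (List.range' (2*t*g) (2*g)).map F := by
    intro t
    have hdec : List.range' (2*t*g) (2*g)
        = ([2*t*g] ++ List.range' (2*t*g+1) (g-1)) ++ ([2*t*g+g] ++ List.range' (2*t*g+g+1) (g-1)) := by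
      have e1 : List.range' (2*t*g) 1 ++ List.range' (2*t*g + 1*1) (g-1) 1 = List.range' (2*t*g) ((g-1)+1) :=
        Nat.add_comm 1 (g-1) ▸ @List.range'_append (2*t*g) 1 (g-1) 1
      have e2 : List.range' (2*t*g+g) 1 ++ List.range' ((2*t*g+g) + 1*1) (g-1) 1
          = List.range' (2*t*g+g) ((g-1)+1) := Nat.add_comm 1 (g-1) ▸ @List.range'_append (2*t*g+g) 1 (g-1) 1
      have e3 : List.range' (2*t*g) g ++ List.range' (2*t*g + 1*g) g 1 = List.range' (2*t*g) (g+g) :=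
        @List.range'_append (2*t*g) g g 1
      rw [show (g-1)+1 = g by omega] at e1 e2
      rw [show 2*t*g + 1*1 = 2*t*g+1 by ring] at e1
      rw [show (2*t*g+g) + 1*1 = 2*t*g+g+1 by ring] at e2
      rw [show 2*t*g + 1*g = 2*t*g+g by ring] at e3
      rw [List.range'_one] at e1 e2
      rw [show 2*g = g+g by ring, ← e3, ← e1, ← e2]
    rw [hdec]
    have c1 : F (2*t*g) = epow σ x' (if f (2*(t:ℤ)*(g:ℤ)) = x' then (1:ℤ) else -1) := by
      rw [hxval t]
      show f ((2*t*g : ℕ) : ℤ) = f (2*(t:ℤ)*(g:ℤ))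
      exact congrArg f (by push_cast; ring)
    have c2 : (List.range' (2*t*g+1) (g-1)).map F
        = (List.range (g-1)).map (fun u : ℕ => f ((u:ℤ)+1)) := by
      apply List.ext_getElem
      · simp
      · intro u h1 h2
        have hu : u < g - 1 := by simpa using h2
        simp only [List.getElem_map, List.getElem_range', List.getElem_range]
        show f ((2*t*g+1+1*u : ℕ) : ℤ) = f ((u:ℤ)+1)
        have harg : ((2*t*g+1+1*u : ℕ) : ℤ) = ((u:ℤ)+1) + 2*(g:ℤ)*t := by push_cast; ring
        rw [harg, per _ _ (ndvd_of_lt g (by omega) (by omega))]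
    have c3 : F (2*t*g+g) = epow σ y' (if f ((2*(t:ℤ)+1)*(g:ℤ)) = y' then (1:ℤ) else -1) := by
      rw [hyval t]
      show f ((2*t*g+g : ℕ) : ℤ) = f ((2*(t:ℤ)+1)*(g:ℤ))
      exact congrArg f (by push_cast; ring)
    have c4 : (List.range' (2*t*g+g+1) (g-1)).map F
        = invol σ ((List.range (g-1)).map (fun u : ℕ => f ((u:ℤ)+1))) := by
      -- c4
      apply List.ext_getElem
      · simp [invol_length]
      · intro u h1 h2
        have hu : u < g - 1 := by simpa using h1
        simp only [List.getElem_map, List.getElem_range']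
        simp only [invol, List.getElem_reverse, List.getElem_map, List.getElem_range,
          List.length_map, List.length_range]
        show f ((2*t*g+g+1+1*u : ℕ) : ℤ) = σ (f (((g - 1 - 1 - u : ℕ) : ℤ)+1))
        have harg : ((2*t*g+g+1+1*u : ℕ) : ℤ) = ((g:ℤ)+1+(u:ℤ)) + 2*(g:ℤ)*(t:ℤ) := by push_cast; ring
        rw [harg]
        have hnd : ¬ ((g:ℤ) ∣ ((g:ℤ)+1+(u:ℤ))) := by
          intro hd
          have h5 : (g:ℤ) ∣ (1+(u:ℤ)) := by
            have h6 := dvd_sub hd (dvd_refl (g:ℤ))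
            simpa [show (g:ℤ)+1+(u:ℤ) - g = 1+(u:ℤ) by ring] using h6
          exact ndvd_of_lt g (by omega) (by omega) h5
        rw [per _ _ hnd]
        have hrefl := reflg ((g:ℤ)-1-(u:ℤ)) 1 (ndvd_of_lt g (by omega) (by omega))
        rw [show 2*(g:ℤ)*1 - ((g:ℤ)-1-(u:ℤ)) = (g:ℤ)+1+(u:ℤ) by ring] at hrefl
        rw [hrefl]
        have harg2 : ((g:ℤ)-1-(u:ℤ)) = (((g - 1 - 1 - u : ℕ) : ℤ)+1) := by omega
        rw [harg2]
    rw [← c1, ← c3, ← c4, ← c2]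
    simp [List.append_assoc]
  have FLAT : ∀ c : ℕ, ((List.range c).map (fun t => (List.range' (2*t*g) (2*g)).map F)).flatten
      = (List.range' 0 (c*(2*g))).map F := by
    intro c
    induction c with
    | zero => simp
    | succ c ih =>
      rw [List.range_succ, List.map_append, List.flatten_append, ih]
      simp only [List.map_cons, List.map_nil, List.flatten_cons, List.flatten_nil, List.append_nil]
      rw [← List.map_append]
      congr 1
      have e := @List.range'_append 0 (c*(2*g)) (2*g) 1
      rw [show 0 + 1*(c*(2*g)) = 2*c*g by ring] at e
      rw [e]
      congr 1
      ring
  have hfun : (fun t : ℕ =>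
      [epow σ x' (if f (2*(t:ℤ)*(g:ℤ)) = x' then (1:ℤ) else -1)]
        ++ (List.range (g-1)).map (fun u : ℕ => f ((u:ℤ)+1))
        ++ [epow σ y' (if f ((2*(t:ℤ)+1)*(g:ℤ)) = y' then (1:ℤ) else -1)]
        ++ invol σ ((List.range (g-1)).map (fun u : ℕ => f ((u:ℤ)+1))))
      = fun t : ℕ => (List.range' (2*t*g) (2*g)).map F := by
    funext t
    have := BLK t
    simpa [List.append_assoc] using this
  rw [hfun, FLAT s, show s*(2*g) = 2*k by rw [← hsg]; ring, ← List.range_eq_range']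

/-- Suppose `W = x₁V₁y₁V₁⁻¹ = z₀z₁⋯z_{2k-1}` is a cyclically reduced word of length `2k`
in the free monoid on an alphabet with involution `z ↦ z⁻¹`, and for some `j ≢ 0 (mod k)`
the cyclic permutation `z_jz_{j+1}⋯z_{2k-1}z₀⋯z_{j-1}` of `W` is identically equal to
`x₂V₂y₂V₂⁻¹`.  Then either (1) `{x₁, y₁} = {x₂, y₂}` and
`W ≡ ∏_{t=1}^{s} x₁^{α(t)} V₃ y₁^{β(t)} V₃⁻¹` for some odd `s > 1`, some word `V₃`, and
exponents `α(t), β(t) ∈ {±1}`; or (2) `y₁ = x₁⁻¹`, `y₂ = x₂⁻¹` and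
`W ≡ ∏_{t=1}^{s} x₁^{α(t)} V₃ x₂^{β(t)} V₃⁻¹` for some even `s > 0`, some word `V₃`, and
exponents `α(t), β(t) ∈ {±1}`. -/
theorem cyclic_conjugate_decomposition (σ : S → S) (hσ : Function.Involutive σ)
    (x₁ y₁ x₂ y₂ : S) (V₁ V₂ : List S) (k j : ℕ)
    (W : List S) (hW : W = [x₁] ++ V₁ ++ [y₁] ++ invol σ V₁)
    (hlen : W.length = 2 * k)
    (hred : CyclicallyReduced σ W)
    (hj : ¬ j % k = 0)
    (hrot : W.rotate j = [x₂] ++ V₂ ++ [y₂] ++ invol σ V₂) :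
    (({x₁, y₁} : Set S) = {x₂, y₂} ∧
      ∃ (s : ℕ) (V₃ : List S) (α β : ℕ → ℤ), Odd s ∧ 1 < s ∧
        (∀ t, α t = 1 ∨ α t = -1) ∧ (∀ t, β t = 1 ∨ β t = -1) ∧
        W = ((List.range s).map fun t =>
          [epow σ x₁ (α t)] ++ V₃ ++ [epow σ y₁ (β t)] ++ invol σ V₃).flatten) ∨
    (y₁ = σ x₁ ∧ y₂ = σ x₂ ∧
      ∃ (s : ℕ) (V₃ : List S) (α β : ℕ → ℤ), Even s ∧ 0 < s ∧
        (∀ t, α t = 1 ∨ α t = -1) ∧ (∀ t, β t = 1 ∨ β t = -1) ∧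
        W = ((List.range s).map fun t =>
          [epow σ x₁ (α t)] ++ V₃ ++ [epow σ x₂ (β t)] ++ invol σ V₃).flatten) := by
  classical
  have hWlen : W.length = 2*(V₁.length + 1) := by rw [hW]; exact struct_length σ x₁ y₁ V₁
  have hk1 : V₁.length + 1 = k := by omega
  have hkpos : 0 < k := by omega
  set f : ℤ → S := fcyc W x₁ with hf
  have hWlenZ : (W.length:ℤ) = 2*(k:ℤ) := by rw [hlen]; push_cast; ring
  have fperiod : ∀ i c : ℤ, f (i + 2*(k:ℤ)*c) = f i := by
    intro i c
    have h := fcyc_period W x₁ i c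
    rw [hWlenZ] at h
    exact h
  have f0 : f 0 = x₁ := by rw [hf, hW]; exact fcyc_zero σ x₁ y₁ x₁ V₁
  have fk : f (k:ℤ) = y₁ := by rw [hf, hW]; exact fcyc_mid σ x₁ y₁ x₁ V₁ k hk1
  have refl0 : ∀ i : ℤ, ¬((k:ℤ) ∣ i) → f (-i) = σ (f i) := by
    intro i hi
    rw [hf, hW]
    exact fcyc_reflect σ x₁ y₁ x₁ V₁ k hσ hk1 i hi
  have hrotlen : (W.rotate j).length = 2*k := by rw [List.length_rotate, hlen]
  have hV2len : V₂.length + 1 = k := by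
    have h := struct_length σ x₂ y₂ V₂
    rw [← hrot] at h
    omega
  have hrlZ : ((W.rotate j).length : ℤ) = 2*(k:ℤ) := by rw [hrotlen]; push_cast; ring
  have link : ∀ i : ℤ, fcyc (W.rotate j) x₁ i = f ((j:ℤ) + i) := by
    intro i
    have hnpos : (0:ℤ) < ((W.rotate j).length : ℤ) := by rw [hrlZ]; positivity
    obtain ⟨r, hr⟩ : ∃ r : ℕ, (r:ℤ) = i % (((W.rotate j).length:ℕ) : ℤ) :=
      ⟨_, Int.toNat_of_nonneg (Int.emod_nonneg i (by omega))⟩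
    have hrlt : r < 2*k := by
      have h2 := Int.emod_lt_of_pos i hnpos
      rw [← hr, hrlZ] at h2
      exact_mod_cast h2
    have hq : i = (r:ℤ) + ((W.rotate j).length:ℤ) * (i / ((W.rotate j).length:ℤ)) := by
      rw [hr, Int.emod_def]; ring
    have h1 : fcyc (W.rotate j) x₁ i = fcyc (W.rotate j) x₁ ((r:ℕ):ℤ) := fcyc_shift _ _ hq
    have h2 : fcyc (W.rotate j) x₁ ((r:ℕ):ℤ) = (W.rotate j).getD r x₁ :=
      fcyc_nat _ _ r (by omega)
    have h3 : (W.rotate j).getD r x₁ = W.getD ((r + j) % (2*k)) x₁ := by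
      rw [List.getD_eq_getElem _ _ (by omega : r < (W.rotate j).length),
        List.getElem_rotate]
      rw [List.getD_eq_getElem _ _ (by rw [hlen]; exact Nat.mod_lt _ (by omega))]
      congr 1
      rw [hlen]
    have hnat : 2*k*((r+j)/(2*k)) + (r+j) % (2*k) = r + j := Nat.div_add_mod (r+j) (2*k)
    have h4 : f ((j:ℤ) + (r:ℤ)) = f ((((r + j) % (2*k) : ℕ)) : ℤ) := by
      apply fcyc_shift W x₁ (c := (((r+j)/(2*k) : ℕ) : ℤ))
      rw [hWlenZ]
      have hnatZ : 2*(k:ℤ)*(((r+j)/(2*k) : ℕ) : ℤ) + (((r+j) % (2*k) : ℕ) : ℤ) = (r:ℤ) + (j:ℤ) := by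
        exact_mod_cast congrArg (Nat.cast : ℕ → ℤ) hnat
      linarith [hnatZ]
    have h5 : f ((j:ℤ) + i) = f ((j:ℤ) + (r:ℤ)) := by
      apply fcyc_shift W x₁ (c := i / (((W.rotate j).length:ℕ):ℤ))
      rw [hWlenZ]
      rw [hrlZ]
      rw [hrlZ] at hq
      linarith [hq]
    rw [h1, h2, h3, h5, h4]
    exact (fcyc_nat W x₁ _ (by rw [hlen]; exact Nat.mod_lt _ (by omega))).symm
  have fj : f (j:ℤ) = x₂ := by
    have h := link 0
    rw [add_zero] at h
    rw [← h, hrot]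
    exact fcyc_zero σ x₂ y₂ x₁ V₂
  have fjk : f ((j:ℤ) + (k:ℤ)) = y₂ := by
    rw [← link (k:ℤ), hrot]
    exact fcyc_mid σ x₂ y₂ x₁ V₂ k hV2len
  have reflj : ∀ i : ℤ, ¬((k:ℤ) ∣ (i - (j:ℤ))) → f (2*(j:ℤ) - i) = σ (f i) := by
    intro i hi
    have h : fcyc (W.rotate j) x₁ (-(i - (j:ℤ))) = σ (fcyc (W.rotate j) x₁ (i - (j:ℤ))) := by
      rw [hrot]
      exact fcyc_reflect σ x₂ y₂ x₁ V₂ k hσ hV2len (i - (j:ℤ)) hi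
    rw [link, link] at h
    rw [show (j:ℤ) + -(i - (j:ℤ)) = 2*(j:ℤ) - i by ring,
      show (j:ℤ) + (i - (j:ℤ)) = i by ring] at h
    exact h
  -- number theory
  set g : ℕ := Nat.gcd j k with hgdef
  have hgpos : 0 < g := Nat.gcd_pos_of_pos_right _ hkpos
  have hgj : g ∣ j := Nat.gcd_dvd_left j k
  have hgk : g ∣ k := Nat.gcd_dvd_right j k
  set s : ℕ := k / g with hsdef
  have hsg : s * g = k := Nat.div_mul_cancel hgk
  set j' : ℕ := j / g with hj'def
  have hj'g : j' * g = j := Nat.div_mul_cancel hgj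
  have cop : Nat.Coprime j' s := Nat.coprime_div_gcd_div_gcd hgpos
  have hspos : 0 < s := by
    rcases Nat.eq_zero_or_pos s with h | h
    · rw [h] at hsg; omega
    · exact h
  have hs2 : 2 ≤ s := by
    rcases (by omega : s = 1 ∨ 2 ≤ s) with h | h
    · exfalso
      apply hj
      have hgk' : g = k := by rw [h, one_mul] at hsg; exact hsg
      have hkj : k ∣ j := hgk' ▸ hgj
      obtain ⟨c, rfl⟩ := hkj
      exact Nat.mul_mod_right k c
    · exact h
  set j'' : ℕ := if j' % 2 = 1 then j' else j' + s with hj''def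
  have hj''odd : j'' % 2 = 1 := by
    rw [hj''def]
    split
    · assumption
    · rename_i h
      have hj'even : j' % 2 = 0 := by omega
      have hsodd : s % 2 = 1 := by
        rcases (by omega : s % 2 = 0 ∨ s % 2 = 1) with hs | hs
        · exfalso
          have h2 : 2 ∣ Nat.gcd j' s := Nat.dvd_gcd (by omega) (by omega)
          rw [cop] at h2
          omega
        · exact hs
      omega
  have copj'' : Nat.Coprime j'' s := by
    rw [hj''def]
    split
    · exact cop
    · exact (Nat.coprime_add_self_left).mpr cop
  have hcase : j'' * g = j ∨ j'' * g = j + k := by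
    rw [hj''def]
    split
    · left; exact hj'g
    · right; rw [add_mul, hj'g, hsg]
  have hsgZ : (s:ℤ) * (g:ℤ) = (k:ℤ) := by exact_mod_cast congrArg (Nat.cast : ℕ → ℤ) hsg
  have iscop : IsCoprime (s:ℤ) (j'':ℤ) := Nat.isCoprime_iff_coprime.mpr copj''.symm
  have hgne : (g:ℤ) ≠ 0 := by
    have : (0:ℤ) < (g:ℤ) := by exact_mod_cast hgpos
    omega
  have KEY : ∀ t : ℤ, ¬((s:ℤ) ∣ t) → ¬((k:ℤ) ∣ t * ((j'':ℤ) * (g:ℤ))) := by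
    intro t hst hkd
    apply hst
    rw [← hsgZ, show t * ((j'':ℤ) * (g:ℤ)) = (t * (j'':ℤ)) * (g:ℤ) by ring] at hkd
    exact iscop.dvd_of_dvd_mul_right ((mul_dvd_mul_iff_right hgne).mp hkd)
  have hdvd_gk : ∀ i : ℤ, ¬((g:ℤ) ∣ i) → ¬((k:ℤ) ∣ i) := by
    intro i hgi hki
    exact hgi (dvd_trans (by exact_mod_cast hgk) hki)
  have hgjZ : (g:ℤ) ∣ (j:ℤ) := by exact_mod_cast hgj
  have per2j : ∀ i : ℤ, ¬((g:ℤ) ∣ i) → f (i + 2*(j:ℤ)) = f i := by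
    intro i hi
    have h1 : f (2*(j:ℤ) - (i + 2*(j:ℤ))) = σ (f (i + 2*(j:ℤ))) := by
      apply reflj
      intro hd
      apply hi
      have h2 : (g:ℤ) ∣ (i + 2*(j:ℤ) - (j:ℤ)) := dvd_trans (by exact_mod_cast hgk) hd
      have h4 := dvd_sub h2 hgjZ
      simpa [show i + 2*(j:ℤ) - (j:ℤ) - (j:ℤ) = i by ring] using h4
    rw [show 2*(j:ℤ) - (i + 2*(j:ℤ)) = -i by ring] at h1
    rw [refl0 i (hdvd_gk i hi)] at h1
    exact (hσ.injective h1).symm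
  have per2jZ : ∀ c : ℤ, ∀ i : ℤ, ¬((g:ℤ) ∣ i) → f (i + 2*(j:ℤ)*c) = f i := by
    intro c
    induction c using Int.induction_on with
    | zero => intro i _; simp
    | succ c ih =>
      intro i hi
      have h1 : f ((i + 2*(j:ℤ)*c) + 2*(j:ℤ)) = f (i + 2*(j:ℤ)*c) := by
        apply per2j
        intro hd
        apply hi
        have h2 : (g:ℤ) ∣ 2*(j:ℤ)*c := Dvd.dvd.mul_right (Dvd.dvd.mul_left hgjZ 2) c
        have h4 := dvd_sub hd h2
        simpa using h4
      rw [show i + 2*(j:ℤ)*((c:ℤ)+1) = (i + 2*(j:ℤ)*c) + 2*(j:ℤ) by ring, h1]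
      exact ih i hi
    | pred c ih =>
      intro i hi
      have h2 : (g:ℤ) ∣ 2*(j:ℤ)*(-(c:ℤ)-1) := Dvd.dvd.mul_right (Dvd.dvd.mul_left hgjZ 2) _
      have hnd : ¬ ((g:ℤ) ∣ (i + 2*(j:ℤ)*(-(c:ℤ)-1))) := by
        intro hd
        apply hi
        have h4 := dvd_sub hd h2
        simpa using h4
      have h1 : f ((i + 2*(j:ℤ)*(-(c:ℤ)-1)) + 2*(j:ℤ)) = f (i + 2*(j:ℤ)*(-(c:ℤ)-1)) := per2j _ hnd
      rw [show (i + 2*(j:ℤ)*(-(c:ℤ)-1)) + 2*(j:ℤ) = i + 2*(j:ℤ)*(-(c:ℤ)) by ring] at h1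
      rw [← h1]
      exact ih i hi
  obtain ⟨A, B, hbezg⟩ : ∃ A B : ℤ, (g:ℤ) = (j:ℤ) * A + (k:ℤ) * B :=
    ⟨Nat.gcdA j k, Nat.gcdB j k, by rw [hgdef]; exact Nat.gcd_eq_gcd_ab j k⟩
  have per : ∀ i c : ℤ, ¬((g:ℤ) ∣ i) → f (i + 2*(g:ℤ)*c) = f i := by
    intro i c hi
    have harg : i + 2*(g:ℤ)*c = (i + 2*(j:ℤ)*(A*c)) + 2*(k:ℤ)*(B*c) := by
      linear_combination (2*c) * hbezg
    rw [harg, fperiod, per2jZ (A*c) i hi]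
  have reflg : ∀ i c : ℤ, ¬((g:ℤ) ∣ i) → f (2*(g:ℤ)*c - i) = σ (f i) := by
    intro i c hi
    have h1 : f (-i + 2*(g:ℤ)*c) = f (-i) := per (-i) c (by simpa using hi)
    rw [show 2*(g:ℤ)*c - i = -i + 2*(g:ℤ)*c by ring, h1]
    exact refl0 i (hdvd_gk i hi)
  -- special-point function
  set Y : ℤ → S := fun t => f (t * ((j'':ℤ) * (g:ℤ))) with hY
  have hYt : ∀ t : ℤ, Y t = f (t * ((j'':ℤ) * (g:ℤ))) := fun _ => rfl
  have YP : ∀ t u : ℤ, Y (t + 2*(s:ℤ)*u) = Y t := by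
    intro t u
    rw [hYt, hYt]
    have harg : (t + 2*(s:ℤ)*u) * ((j'':ℤ) * (g:ℤ))
        = t * ((j'':ℤ) * (g:ℤ)) + 2*(k:ℤ)*(u*(j'':ℤ)) := by
      rw [← hsgZ]; ring
    rw [harg, fperiod]
  have YR0 : ∀ t : ℤ, ¬((s:ℤ) ∣ t) → Y (-t) = σ (Y t) := by
    intro t ht
    rw [hYt, hYt]
    rw [show (-t) * ((j'':ℤ) * (g:ℤ)) = -(t * ((j'':ℤ) * (g:ℤ))) by ring]
    exact refl0 _ (KEY t ht)
  have reflj'' : ∀ i : ℤ, ¬((k:ℤ) ∣ (i - (j'':ℤ)*(g:ℤ))) →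
      f (2*((j'':ℤ)*(g:ℤ)) - i) = σ (f i) := by
    intro i hi
    rcases hcase with hc | hc
    · have hcZ : (j'':ℤ)*(g:ℤ) = (j:ℤ) := by exact_mod_cast hc
      rw [hcZ] at hi ⊢
      exact reflj i hi
    · have hcZ : (j'':ℤ)*(g:ℤ) = (j:ℤ) + (k:ℤ) := by exact_mod_cast hc
      rw [hcZ] at hi ⊢
      have h1 : f ((2*(j:ℤ) - i) + 2*(k:ℤ)*1) = f (2*(j:ℤ) - i) := fperiod _ 1
      rw [show 2*((j:ℤ) + (k:ℤ)) - i = (2*(j:ℤ) - i) + 2*(k:ℤ)*1 by ring, h1]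
      apply reflj
      intro hd
      apply hi
      have h4 : (k:ℤ) ∣ (i - (j:ℤ)) - (k:ℤ) := dvd_sub hd (dvd_refl _)
      simpa [show i - (j:ℤ) - (k:ℤ) = i - ((j:ℤ) + (k:ℤ)) by ring] using h4
  have YRj : ∀ t : ℤ, ¬((s:ℤ) ∣ (t - 1)) → Y (2 - t) = σ (Y t) := by
    intro t ht
    rw [hYt, hYt]
    rw [show (2 - t) * ((j'':ℤ) * (g:ℤ)) = 2*((j'':ℤ)*(g:ℤ)) - t * ((j'':ℤ)*(g:ℤ)) by ring]
    apply reflj''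
    rw [show t * ((j'':ℤ)*(g:ℤ)) - (j'':ℤ)*(g:ℤ) = (t - 1) * ((j'':ℤ)*(g:ℤ)) by ring]
    exact KEY (t-1) ht
  have Y0 : Y 0 = x₁ := by rw [hYt]; simpa using f0
  obtain ⟨codd, hcodd⟩ : ∃ c : ℤ, (j'':ℤ) = 2*c + 1 :=
    ⟨(j'':ℤ)/2, by have h := hj''odd; omega⟩
  have Ys : Y (s:ℤ) = y₁ := by
    rw [hYt]
    have harg : (s:ℤ) * ((j'':ℤ) * (g:ℤ)) = (k:ℤ) + 2*(k:ℤ)*codd := by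
      rw [← hsgZ, hcodd]; ring
    rw [harg, fperiod, fk]
  have Y1 : Y 1 = f ((j'':ℤ)*(g:ℤ)) := by rw [hYt]; simp
  have Ys1 : Y ((s:ℤ)+1) = f ((j'':ℤ)*(g:ℤ) + (k:ℤ)) := by
    rw [hYt]
    have harg : ((s:ℤ)+1) * ((j'':ℤ) * (g:ℤ)) = ((j'':ℤ)*(g:ℤ) + (k:ℤ)) + 2*(k:ℤ)*codd := by
      rw [← hsgZ, hcodd]; ring
    rw [harg, fperiod]
  obtain ⟨EV, OD, HOdd, HEven⟩ := core1 σ hσ s hs2 Y YP YR0 YRj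
  have copj''2s : Nat.Coprime j'' (2*s) :=
    Nat.Coprime.mul_right (Nat.coprime_two_right.mpr (Nat.odd_iff.mpr hj''odd)) copj''
  obtain ⟨e, ce, hbez⟩ : ∃ e c : ℤ, (j'':ℤ) * e = 1 + 2*(s:ℤ)*c := by
    refine ⟨Nat.gcdA j'' (2*s), -(Nat.gcdB j'' (2*s)), ?_⟩
    have h := Nat.gcd_eq_gcd_ab j'' (2*s)
    rw [Nat.Coprime.gcd_eq_one copj''2s] at h
    push_cast at h ⊢
    linarith [h]
  have eodd : ∃ w : ℤ, e = 2*w + 1 := by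
    have hodd : Odd ((j'':ℤ) * e) := ⟨(s:ℤ)*ce, by linarith [hbez]⟩
    exact (Int.odd_mul.mp hodd).2
  have classEven : ∀ m : ℤ, f (2*m*(g:ℤ)) = x₁ ∨ f (2*m*(g:ℤ)) = σ x₁ := by
    intro m
    have h := EV (m * e)
    rw [Y0, hYt] at h
    have harg : (2*(m*e)) * ((j'':ℤ) * (g:ℤ)) = 2*m*(g:ℤ) + 2*(k:ℤ)*(2*m*ce) := by
      rw [← hsgZ]
      linear_combination (2*m*(g:ℤ)) * hbez
    rw [harg, fperiod] at h
    exact h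
  have classOdd : ∀ m : ℤ, f ((2*m+1)*(g:ℤ)) = Y 1 ∨ f ((2*m+1)*(g:ℤ)) = σ (Y 1) := by
    intro m
    obtain ⟨w, hw⟩ : ∃ w : ℤ, (2*m+1)*e = 2*w+1 := by
      obtain ⟨w0, hw0⟩ := eodd
      exact ⟨2*m*w0 + m + w0, by rw [hw0]; ring⟩
    have h := OD w
    rw [hYt (2*w+1)] at h
    rw [show (2*w+1) * ((j'':ℤ)*(g:ℤ)) = ((2*m+1)*e) * ((j'':ℤ) * (g:ℤ)) by rw [← hw]] at h
    have harg : ((2*m+1)*e) * ((j'':ℤ) * (g:ℤ)) = (2*m+1)*(g:ℤ) + 2*(k:ℤ)*((2*m+1)*ce) := by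
      rw [← hsgZ]
      linear_combination ((2*m+1)*(g:ℤ)) * hbez
    rw [harg, fperiod] at h
    exact h
  have WEQ : W = (List.range (2*k)).map (fun u : ℕ => f (u:ℤ)) := by
    apply List.ext_getElem
    · simp [hlen]
    · intro i h1 h2
      simp only [List.getElem_map, List.getElem_range]
      rw [← List.getD_eq_getElem W x₁ h1]
      exact (fcyc_nat W x₁ i h1).symm
  rcases Nat.even_or_odd s with hse | hso
  · -- s even: case (2)
    have hsm : s % 2 = 0 := Nat.even_iff.mp hse
    obtain ⟨he1, he2⟩ := HEven hsm
    have hy1 : y₁ = σ x₁ := by rw [← Ys, he1, Y0]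
    have hYvals : (Y 1 = x₂ ∧ Y ((s:ℤ)+1) = y₂) ∨ (Y 1 = y₂ ∧ Y ((s:ℤ)+1) = x₂) := by
      rcases hcase with hc | hc
      · have hcZ : (j'':ℤ)*(g:ℤ) = (j:ℤ) := by exact_mod_cast hc
        exact Or.inl ⟨by rw [Y1, hcZ, fj], by rw [Ys1, hcZ, fjk]⟩
      · have hcZ : (j'':ℤ)*(g:ℤ) = (j:ℤ) + (k:ℤ) := by exact_mod_cast hc
        refine Or.inr ⟨by rw [Y1, hcZ, fjk], ?_⟩
        rw [Ys1, hcZ]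
        rw [show (j:ℤ) + (k:ℤ) + (k:ℤ) = (j:ℤ) + 2*(k:ℤ)*1 by ring, fperiod, fj]
    have hy2 : y₂ = σ x₂ := by
      rcases hYvals with ⟨h1, h2⟩ | ⟨h1, h2⟩
      · rw [← h2, he2, h1]
      · have hx2 : x₂ = σ y₂ := by rw [← h2, he2, h1]
        rw [hx2, hσ]
    have hyclass : ∀ t : ℤ, f ((2*t+1)*(g:ℤ)) = x₂ ∨ f ((2*t+1)*(g:ℤ)) = σ x₂ := by
      intro t
      rcases hYvals with ⟨h1, _⟩ | ⟨h1, _⟩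
      · rw [← h1]; exact classOdd t
      · have hY1 : Y 1 = σ x₂ := by rw [h1, hy2]
        rcases classOdd t with h | h
        · right; rw [h, hY1]
        · left; rw [h, hY1, hσ]
    obtain ⟨V₃, α, β, hα, hβ, hflat⟩ :=
      assemble σ f g s k hgpos hsg per reflg x₁ x₂ classEven hyclass
    exact Or.inr ⟨hy1, hy2, s, V₃, α, β, hse, hspos, hα, hβ, by rw [WEQ, ← hflat]⟩
  · -- s odd: case (1)
    have hsm : s % 2 = 1 := Nat.odd_iff.mp hso
    obtain ⟨ho1, ho2⟩ := HOdd hsm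
    have hY1y : Y 1 = y₁ := ho1.symm.trans Ys
    have hYs1x : Y ((s:ℤ)+1) = x₁ := ho2.trans Y0
    have hYvals : (Y 1 = x₂ ∧ Y ((s:ℤ)+1) = y₂) ∨ (Y 1 = y₂ ∧ Y ((s:ℤ)+1) = x₂) := by
      rcases hcase with hc | hc
      · have hcZ : (j'':ℤ)*(g:ℤ) = (j:ℤ) := by exact_mod_cast hc
        exact Or.inl ⟨by rw [Y1, hcZ, fj], by rw [Ys1, hcZ, fjk]⟩
      · have hcZ : (j'':ℤ)*(g:ℤ) = (j:ℤ) + (k:ℤ) := by exact_mod_cast hc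
        refine Or.inr ⟨by rw [Y1, hcZ, fjk], ?_⟩
        rw [Ys1, hcZ]
        rw [show (j:ℤ) + (k:ℤ) + (k:ℤ) = (j:ℤ) + 2*(k:ℤ)*1 by ring, fperiod, fj]
    have hset : ({x₁, y₁} : Set S) = {x₂, y₂} := by
      rcases hYvals with ⟨h1, h2⟩ | ⟨h1, h2⟩
      · have e1 : x₂ = y₁ := h1.symm.trans hY1y
        have e2 : y₂ = x₁ := h2.symm.trans hYs1x
        rw [e1, e2]
        exact Set.pair_comm x₁ y₁
      · have e1 : y₂ = y₁ := h1.symm.trans hY1y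
        have e2 : x₂ = x₁ := h2.symm.trans hYs1x
        rw [e1, e2]
    have hyclass : ∀ t : ℤ, f ((2*t+1)*(g:ℤ)) = y₁ ∨ f ((2*t+1)*(g:ℤ)) = σ y₁ := by
      intro t
      rw [← hY1y]
      exact classOdd t
    obtain ⟨V₃, α, β, hα, hβ, hflat⟩ :=
      assemble σ f g s k hgpos hsg per reflg x₁ y₁ classEven hyclass
    exact Or.inl ⟨hset, s, V₃, α, β, hso, by omega, hα, hβ, by rw [WEQ, ← hflat]⟩

end FreeMonoidInvolution
end

section
/- Let p and q be integers with p, q ≥ 2, and let H be the triangle group with presentation ⟨x, y | x^p, y^q, (xy)²⟩. If the element x^α y^β x^γ y^δ is trivial in H, where α, γ ∈ {1, 2, …, p−1} and β, δ ∈ {1, 2, …, q−1}, then one of the following holds: (1) 2 ∈ {p, q}; (2) α = β = γ = δ = 1; (3) α = γ = p−1 and β = δ = q−1. -/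
open Real Matrix
set_option maxHeartbeats 1000000

/-- The relators of the triangle group `⟨x, y | x^p, y^q, (xy)²⟩`, with `x` and `y` the
generators indexed by `true` and `false` respectively. -/
def triangleRels (p q : ℕ) : Set (FreeGroup Bool) :=
  {FreeGroup.of true ^ p, FreeGroup.of false ^ q, (FreeGroup.of true * FreeGroup.of false) ^ 2}

variable {A : Type} [CommRing A]

noncomputable def Rm (f : ℝ →+* A) (θ : ℝ) : Matrix (Fin 2) (Fin 2) A :=
  !![f (Real.cos θ), f (Real.sin θ); -f (Real.sin θ), f (Real.cos θ)]

noncomputable def Sm (f : ℝ →+* A) (u v : A) (θ : ℝ) : Matrix (Fin 2) (Fin 2) A :=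
  !![f (Real.cos θ), u * f (Real.sin θ); -(v * f (Real.sin θ)), f (Real.cos θ)]

lemma pyth (f : ℝ →+* A) (θ : ℝ) : f (Real.sin θ) ^ 2 + f (Real.cos θ) ^ 2 = 1 := by
  rw [← map_pow, ← map_pow, ← _root_.map_add, Real.sin_sq_add_cos_sq, _root_.map_one]

lemma det_Rm (f : ℝ →+* A) (θ : ℝ) : (Rm f θ).det = 1 := by
  simp only [Rm, Matrix.det_fin_two_of]
  linear_combination pyth f θ

lemma det_Sm (f : ℝ →+* A) (u v : A) (huv : u * v = 1) (θ : ℝ) :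
    (Sm f u v θ).det = 1 := by
  simp only [Sm, Matrix.det_fin_two_of]
  linear_combination pyth f θ + (f (Real.sin θ))^2 * huv

lemma Rm_mul (f : ℝ →+* A) (θ₁ θ₂ : ℝ) : Rm f θ₁ * Rm f θ₂ = Rm f (θ₁ + θ₂) := by
  ext i j
  fin_cases i <;> fin_cases j <;>
    simp [Rm, Matrix.mul_apply, Fin.sum_univ_two, Real.cos_add, Real.sin_add] <;> ring1

lemma Sm_mul (f : ℝ →+* A) (u v : A) (huv : u * v = 1) (θ₁ θ₂ : ℝ) :
    Sm f u v θ₁ * Sm f u v θ₂ = Sm f u v (θ₁ + θ₂) := by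
  ext i j
  fin_cases i <;> fin_cases j <;>
    simp [Sm, Matrix.mul_apply, Fin.sum_univ_two, Real.cos_add, Real.sin_add] <;>
    (first
      | ring1
      | linear_combination (-(f (Real.sin θ₁) * f (Real.sin θ₂))) * huv
      | linear_combination (f (Real.sin θ₁) * f (Real.sin θ₂)) * huv)

lemma RS_mul (f : ℝ →+* A) (u v : A) (θ₁ θ₂ : ℝ) :
    Rm f θ₁ * Sm f u v θ₂ =
      !![f (Real.cos θ₁) * f (Real.cos θ₂) - v * (f (Real.sin θ₁) * f (Real.sin θ₂)),
         u * (f (Real.cos θ₁) * f (Real.sin θ₂)) + f (Real.sin θ₁) * f (Real.cos θ₂);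
         -(f (Real.sin θ₁) * f (Real.cos θ₂)) - v * (f (Real.cos θ₁) * f (Real.sin θ₂)),
         f (Real.cos θ₁) * f (Real.cos θ₂) - u * (f (Real.sin θ₁) * f (Real.sin θ₂))] := by
  ext i j
  fin_cases i <;> fin_cases j <;>
    simp [Rm, Sm, Matrix.mul_apply, Fin.sum_univ_two] <;> ring1

lemma SR_mul (f : ℝ →+* A) (u v : A) (θ₁ θ₂ : ℝ) :
    Sm f u v θ₁ * Rm f θ₂ =
      !![f (Real.cos θ₁) * f (Real.cos θ₂) - u * (f (Real.sin θ₁) * f (Real.sin θ₂)),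
         f (Real.cos θ₁) * f (Real.sin θ₂) + u * (f (Real.sin θ₁) * f (Real.cos θ₂));
         -(v * (f (Real.sin θ₁) * f (Real.cos θ₂))) - f (Real.cos θ₁) * f (Real.sin θ₂),
         f (Real.cos θ₁) * f (Real.cos θ₂) - v * (f (Real.sin θ₁) * f (Real.sin θ₂))] := by
  ext i j
  fin_cases i <;> fin_cases j <;>
    simp [Rm, Sm, Matrix.mul_apply, Fin.sum_univ_two] <;> ring1

lemma Rm_zero (f : ℝ →+* A) : Rm f 0 = 1 := by
  ext i j; fin_cases i <;> fin_cases j <;> simp [Rm]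

lemma Sm_zero (f : ℝ →+* A) (u v : A) : Sm f u v 0 = 1 := by
  ext i j; fin_cases i <;> fin_cases j <;> simp [Sm]

lemma Rm_pow (f : ℝ →+* A) (θ : ℝ) (n : ℕ) : (Rm f θ) ^ n = Rm f (n * θ) := by
  induction n with
  | zero => simp [Rm_zero]
  | succ n ih => rw [pow_succ, ih, Rm_mul]; norm_num; ring_nf

lemma Sm_pow (f : ℝ →+* A) (u v : A) (huv : u * v = 1) (θ : ℝ) (n : ℕ) :
    (Sm f u v θ) ^ n = Sm f u v (n * θ) := by
  induction n with
  | zero => simp [Sm_zero]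
  | succ n ih => rw [pow_succ, ih, Sm_mul f u v huv]; norm_num; ring_nf

lemma Rm_pi (f : ℝ →+* A) : Rm f π = -1 := by
  ext i j; fin_cases i <;> fin_cases j <;> simp [Rm]

lemma Sm_pi (f : ℝ →+* A) (u v : A) : Sm f u v π = -1 := by
  ext i j; fin_cases i <;> fin_cases j <;> simp [Sm]

lemma mul_self_fin_two (M : Matrix (Fin 2) (Fin 2) A) :
    M * M = (Matrix.trace M) • M - (Matrix.det M) • 1 := by
  rw [Matrix.eta_fin_two M]
  ext i j
  fin_cases i <;> fin_cases j <;>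
    simp [Matrix.mul_apply, Fin.sum_univ_two, Matrix.trace_fin_two_of, Matrix.det_fin_two_of,
      Matrix.smul_apply, Matrix.one_apply, smul_eq_mul] <;> ring1


lemma trig_final' (p q α β : ℕ) (hp : 3 ≤ p) (hq : 3 ≤ q) (hα : 1 ≤ α) (hα' : α ≤ p - 1)
    (hβ : 1 ≤ β) (hβ' : β ≤ q - 1)
    (h : Real.cos (α * (π/p)) * Real.cos (β * (π/q)) * (Real.sin (π/p) * Real.sin (π/q))
       = Real.cos (π/p) * Real.cos (π/q) * (Real.sin (α * (π/p)) * Real.sin (β * (π/q)))) :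
    (α = 1 ∧ β = 1) ∨ (α = p - 1 ∧ β = q - 1) := by
  have hπ := Real.pi_pos
  set a := π/(p:ℝ) with ha_def
  set b := π/(q:ℝ) with hb_def
  set A := (α:ℝ) * a with hA_def
  set B := (β:ℝ) * b with hB_def
  have hp0 : (0:ℝ) < p := by positivity
  have hq0 : (0:ℝ) < q := by positivity
  have ha0 : 0 < a := by positivity
  have hb0 : 0 < b := by positivity
  have ha3 : a ≤ π/3 := by
    rw [ha_def]; apply div_le_div_of_nonneg_left hπ.le (by norm_num); exact_mod_cast hp
  have hb3 : b ≤ π/3 := by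
    rw [hb_def]; apply div_le_div_of_nonneg_left hπ.le (by norm_num); exact_mod_cast hq
  have hα1 : (1:ℝ) ≤ (α:ℝ) := by exact_mod_cast hα
  have hβ1 : (1:ℝ) ≤ (β:ℝ) := by exact_mod_cast hβ
  have hαp : (α:ℝ) ≤ (p:ℝ) - 1 := by
    have : (α:ℝ) ≤ ((p-1:ℕ):ℝ) := by exact_mod_cast hα'
    rw [Nat.cast_sub (by omega)] at this; simpa using this
  have hβq : (β:ℝ) ≤ (q:ℝ) - 1 := by
    have : (β:ℝ) ≤ ((q-1:ℕ):ℝ) := by exact_mod_cast hβ'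
    rw [Nat.cast_sub (by omega)] at this; simpa using this
  have hpa : (p:ℝ) * a = π := by rw [ha_def]; field_simp
  have hqb : (q:ℝ) * b = π := by rw [hb_def]; field_simp
  have hA1 : a ≤ A := by nlinarith
  have hA2 : A ≤ π - a := by nlinarith
  have hB1 : b ≤ B := by nlinarith
  have hB2 : B ≤ π - b := by nlinarith
  have hsa : 0 < Real.sin a := Real.sin_pos_of_pos_of_lt_pi ha0 (by linarith)
  have hsb : 0 < Real.sin b := Real.sin_pos_of_pos_of_lt_pi hb0 (by linarith)
  have hca : 0 < Real.cos a := Real.cos_pos_of_mem_Ioo ⟨by linarith, by linarith⟩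
  have hcb : 0 < Real.cos b := Real.cos_pos_of_mem_Ioo ⟨by linarith, by linarith⟩
  have hsA : 0 < Real.sin A := Real.sin_pos_of_pos_of_lt_pi (by linarith) (by linarith)
  have hsB : 0 < Real.sin B := Real.sin_pos_of_pos_of_lt_pi (by linarith) (by linarith)
  have key : 0 < Real.cos A * Real.cos B * (Real.sin a * Real.sin b) := by
    rw [h]; positivity
  have hcc : 0 < Real.cos A * Real.cos B := by
    rcases mul_pos_iff.mp key with ⟨h1, _⟩ | ⟨_, h2⟩
    · exact h1
    · nlinarith
  rcases mul_pos_iff.mp hcc with ⟨hcA, hcB⟩ | ⟨hcA, hcB⟩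
  · -- both cosines positive: α = 1, β = 1
    left
    have hx : 0 ≤ Real.sin (A - a) :=
      Real.sin_nonneg_of_nonneg_of_le_pi (by linarith) (by linarith)
    have hy : 0 ≤ Real.sin (B - b) :=
      Real.sin_nonneg_of_nonneg_of_le_pi (by linarith) (by linarith)
    have comb : Real.cos A * Real.sin a * Real.sin (B - b)
        + Real.cos B * Real.sin b * Real.sin (A - a)
        + Real.sin (A - a) * Real.sin (B - b) = 0 := by
      rw [Real.sin_sub, Real.sin_sub]; linear_combination -h
    have hx0 : Real.sin (A - a) = 0 := by
      rcases hx.eq_or_lt' with h0 | h0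
      · linarith
      · exfalso
        have t1 : 0 ≤ Real.cos A * Real.sin a * Real.sin (B - b) :=
          mul_nonneg (mul_pos hcA hsa).le hy
        have t2 : 0 < Real.cos B * Real.sin b * Real.sin (A - a) :=
          mul_pos (mul_pos hcB hsb) h0
        have t3 : 0 ≤ Real.sin (A - a) * Real.sin (B - b) := mul_nonneg h0.le hy
        linarith
    have hy0 : Real.sin (B - b) = 0 := by
      rcases hy.eq_or_lt' with h0 | h0
      · linarith
      · exfalso
        have t1 : 0 < Real.cos A * Real.sin a * Real.sin (B - b) :=
          mul_pos (mul_pos hcA hsa) h0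
        have t2 : 0 ≤ Real.cos B * Real.sin b * Real.sin (A - a) :=
          mul_nonneg (mul_pos hcB hsb).le hx
        have t3 : 0 ≤ Real.sin (A - a) * Real.sin (B - b) := mul_nonneg hx h0.le
        linarith
    have hAa : A = a := by
      have := (Real.sin_eq_zero_iff_of_lt_of_lt (x := A - a) (by linarith) (by linarith)).mp hx0
      linarith
    have hBb : B = b := by
      have := (Real.sin_eq_zero_iff_of_lt_of_lt (x := B - b) (by linarith) (by linarith)).mp hy0
      linarith
    constructor
    · have h2 : (α:ℝ) * a = 1 * a := by rw [one_mul, ← hA_def]; exact hAa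
      have : (α:ℝ) = 1 := mul_right_cancel₀ (ne_of_gt ha0) h2
      exact_mod_cast this
    · have h2 : (β:ℝ) * b = 1 * b := by rw [one_mul, ← hB_def]; exact hBb
      have : (β:ℝ) = 1 := mul_right_cancel₀ (ne_of_gt hb0) h2
      exact_mod_cast this
  · -- both cosines negative: α = p-1, β = q-1
    right
    have hx : 0 ≤ Real.sin (π - A - a) :=
      Real.sin_nonneg_of_nonneg_of_le_pi (by linarith) (by linarith)
    have hy : 0 ≤ Real.sin (π - B - b) :=
      Real.sin_nonneg_of_nonneg_of_le_pi (by linarith) (by linarith)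
    have comb : (-(Real.cos A * Real.sin a)) * Real.sin (π - B - b)
        + (-(Real.cos B * Real.sin b)) * Real.sin (π - A - a)
        + Real.sin (π - A - a) * Real.sin (π - B - b) = 0 := by
      have e1 : Real.sin (π - A - a) = Real.sin A * Real.cos a + Real.cos A * Real.sin a := by
        rw [show π - A - a = π - (A + a) by ring, Real.sin_pi_sub, Real.sin_add]
      have e2 : Real.sin (π - B - b) = Real.sin B * Real.cos b + Real.cos B * Real.sin b := by
        rw [show π - B - b = π - (B + b) by ring, Real.sin_pi_sub, Real.sin_add]
      rw [e1, e2]; linear_combination -h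
    have hx0 : Real.sin (π - A - a) = 0 := by
      rcases hx.eq_or_lt' with h0 | h0
      · linarith
      · exfalso
        have t1 : 0 ≤ (-(Real.cos A * Real.sin a)) * Real.sin (π - B - b) := by
          apply mul_nonneg _ hy; nlinarith
        have t2 : 0 < (-(Real.cos B * Real.sin b)) * Real.sin (π - A - a) := by
          apply mul_pos _ h0; nlinarith
        have t3 : 0 ≤ Real.sin (π - A - a) * Real.sin (π - B - b) := mul_nonneg h0.le hy
        linarith
    have hy0 : Real.sin (π - B - b) = 0 := by
      rcases hy.eq_or_lt' with h0 | h0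
      · linarith
      · exfalso
        have t1 : 0 < (-(Real.cos A * Real.sin a)) * Real.sin (π - B - b) := by
          apply mul_pos _ h0; nlinarith
        have t2 : 0 ≤ (-(Real.cos B * Real.sin b)) * Real.sin (π - A - a) := by
          apply mul_nonneg _ hx; nlinarith
        have t3 : 0 ≤ Real.sin (π - A - a) * Real.sin (π - B - b) := mul_nonneg hx h0.le
        linarith
    have hAa : A = π - a := by
      have := (Real.sin_eq_zero_iff_of_lt_of_lt (x := π - A - a) (by linarith) (by linarith)).mp hx0
      linarith
    have hBb : B = π - b := by
      have := (Real.sin_eq_zero_iff_of_lt_of_lt (x := π - B - b) (by linarith) (by linarith)).mp hy0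
      linarith
    constructor
    · have h2 : (α:ℝ) * a = ((p:ℝ) - 1) * a := by
        rw [sub_mul, one_mul, hpa, ← hA_def]; exact hAa
      have h3 : (α:ℝ) = (p:ℝ) - 1 := mul_right_cancel₀ (ne_of_gt ha0) h2
      have h4 : ((p - 1 : ℕ) : ℝ) = (p:ℝ) - 1 := by
        rw [Nat.cast_sub (by omega)]; simp
      have : (α:ℝ) = ((p-1:ℕ):ℝ) := by rw [h4]; exact h3
      exact_mod_cast this
    · have h2 : (β:ℝ) * b = ((q:ℝ) - 1) * b := by
        rw [sub_mul, one_mul, hqb, ← hB_def]; exact hBb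
      have h3 : (β:ℝ) = (q:ℝ) - 1 := mul_right_cancel₀ (ne_of_gt hb0) h2
      have h4 : ((q - 1 : ℕ) : ℝ) = (q:ℝ) - 1 := by
        rw [Nat.cast_sub (by omega)]; simp
      have : (β:ℝ) = ((q-1:ℕ):ℝ) := by rw [h4]; exact h3
      exact_mod_cast this

lemma core (f : ℝ →+* A) (hinj : Function.Injective f)
    (u v : A) (huv : u * v = 1)
    (p q : ℕ) (hp : 3 ≤ p) (hq : 3 ≤ q)
    (hsum : (u + v) * f (Real.sin (π/p) * Real.sin (π/q))
          = 2 * f (Real.cos (π/p) * Real.cos (π/q)))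
    (hcancel : ∀ r s : ℝ, (u - v) * f r = (u - v) * f s → r = s)
    (α β γ δ : ℕ)
    (hα : 1 ≤ α) (hα' : α ≤ p - 1) (hγ : 1 ≤ γ) (hγ' : γ ≤ p - 1)
    (hβ : 1 ≤ β) (hβ' : β ≤ q - 1) (hδ : 1 ≤ δ) (hδ' : δ ≤ q - 1)
    (h : (PresentedGroup.of (rels := triangleRels p q) true) ^ α *
         (PresentedGroup.of (rels := triangleRels p q) false) ^ β *
         (PresentedGroup.of (rels := triangleRels p q) true) ^ γ *
         (PresentedGroup.of (rels := triangleRels p q) false) ^ δ = 1) :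
    (α = 1 ∧ β = 1 ∧ γ = 1 ∧ δ = 1) ∨
      (α = p - 1 ∧ γ = p - 1 ∧ β = q - 1 ∧ δ = q - 1) := by
  have hπ := Real.pi_pos
  set a := π/(p:ℝ) with ha_def
  set b := π/(q:ℝ) with hb_def
  have hp0 : (0:ℝ) < p := by positivity
  have hq0 : (0:ℝ) < q := by positivity
  have hpa : (p:ℝ) * a = π := by rw [ha_def]; field_simp
  have hqb : (q:ℝ) * b = π := by rw [hb_def]; field_simp
  let X : Matrix.SpecialLinearGroup (Fin 2) A := ⟨Rm f a, det_Rm f a⟩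
  let Y : Matrix.SpecialLinearGroup (Fin 2) A := ⟨Sm f u v b, det_Sm f u v huv b⟩
  have detneg : (-1 : Matrix (Fin 2) (Fin 2) A).det = 1 := by
    rw [show (-1 : Matrix (Fin 2) (Fin 2) A) = -(1:Matrix (Fin 2) (Fin 2) A) from rfl,
      Matrix.det_neg]
    simp
  let N : Matrix.SpecialLinearGroup (Fin 2) A := ⟨(-1 : Matrix (Fin 2) (Fin 2) A), detneg⟩
  have hNcomm : ∀ g : Matrix.SpecialLinearGroup (Fin 2) A, Commute N g := by
    intro g
    refine Subtype.ext ?_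
    rw [Matrix.SpecialLinearGroup.coe_mul, Matrix.SpecialLinearGroup.coe_mul]
    show (-1 : Matrix (Fin 2) (Fin 2) A) * g.val = g.val * (-1)
    rw [neg_one_mul, mul_neg_one]
  haveI hnormal : (Subgroup.zpowers N).Normal := by
    constructor
    intro x hx g
    obtain ⟨k, hk⟩ := Subgroup.mem_zpowers_iff.mp hx
    have hc : Commute (N ^ k) g := (hNcomm g).zpow_left k
    refine ⟨k, ?_⟩
    show N ^ k = g * x * g⁻¹
    rw [← hk, ← hc.eq, mul_assoc]
    rw [show g * g⁻¹ = 1 from by group, mul_one]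
  -- the homomorphism data
  let φ0 := QuotientGroup.mk' (Subgroup.zpowers N)
  let fb : Bool → Matrix.SpecialLinearGroup (Fin 2) A ⧸ Subgroup.zpowers N :=
    fun t => match t with
      | true => φ0 X
      | false => φ0 Y
  -- relator identities
  have hXp : X ^ p = N := by
    apply Subtype.ext
    rw [Matrix.SpecialLinearGroup.coe_pow]
    show (Rm f a) ^ p = (-1 : Matrix (Fin 2) (Fin 2) A)
    rw [Rm_pow, hpa, Rm_pi]
  have hYq : Y ^ q = N := by
    apply Subtype.ext
    rw [Matrix.SpecialLinearGroup.coe_pow]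
    show (Sm f u v b) ^ q = (-1 : Matrix (Fin 2) (Fin 2) A)
    rw [Sm_pow f u v huv, hqb, Sm_pi]
  have hsa0 : Real.sin a ≠ 0 := by
    have : 0 < Real.sin a := Real.sin_pos_of_pos_of_lt_pi (by positivity) (by
      rw [ha_def]
      calc π / (p:ℝ) ≤ π / 3 := by
            apply div_le_div_of_nonneg_left hπ.le (by norm_num); exact_mod_cast hp
        _ < π := by linarith)
    exact this.ne'
  have hXY : (X * Y) ^ 2 = N := by
    apply Subtype.ext
    rw [Matrix.SpecialLinearGroup.coe_pow, Matrix.SpecialLinearGroup.coe_mul]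
    show (Rm f a * Sm f u v b) ^ 2 = (-1 : Matrix (Fin 2) (Fin 2) A)
    rw [pow_two, mul_self_fin_two]
    have htr : (Rm f a * Sm f u v b).trace = 0 := by
      rw [RS_mul, Matrix.trace_fin_two_of]
      rw [_root_.map_mul, _root_.map_mul] at hsum
      linear_combination -hsum
    have hdet : (Rm f a * Sm f u v b).det = 1 := by
      rw [Matrix.det_mul, det_Rm, det_Sm f u v huv, one_mul]
    rw [htr, hdet, zero_smul, one_smul, zero_sub]
  have hrels : ∀ r ∈ triangleRels p q, FreeGroup.lift fb r = 1 := by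
    intro r hr
    have hmem : r = FreeGroup.of true ^ p ∨ r = FreeGroup.of false ^ q ∨
        r = (FreeGroup.of true * FreeGroup.of false) ^ 2 := by
      simpa [triangleRels] using hr
    have hN1 : ∀ W : Matrix.SpecialLinearGroup (Fin 2) A, W = N → φ0 W = 1 := by
      intro W hW
      rw [hW]
      exact (QuotientGroup.eq_one_iff N).mpr (Subgroup.mem_zpowers N)
    rcases hmem with rfl | rfl | rfl
    · rw [map_pow, FreeGroup.lift_apply_of]
      show (φ0 X) ^ p = 1
      rw [← map_pow]
      exact hN1 _ hXp
    · rw [map_pow, FreeGroup.lift_apply_of]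
      show (φ0 Y) ^ q = 1
      rw [← map_pow]
      exact hN1 _ hYq
    · rw [map_pow, _root_.map_mul, FreeGroup.lift_apply_of, FreeGroup.lift_apply_of]
      show (φ0 X * φ0 Y) ^ 2 = 1
      rw [← _root_.map_mul, ← map_pow]
      exact hN1 _ hXY
  -- apply the homomorphism to h
  let φ := PresentedGroup.toGroup hrels
  have hw : φ0 (X ^ α * Y ^ β * X ^ γ * Y ^ δ) = 1 := by
    have := congrArg φ h
    rw [_root_.map_one, _root_.map_mul, _root_.map_mul, _root_.map_mul, map_pow, map_pow, map_pow,
      map_pow, PresentedGroup.toGroup.of, PresentedGroup.toGroup.of] at this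
    rw [_root_.map_mul, _root_.map_mul, _root_.map_mul, map_pow, map_pow, map_pow, map_pow]
    exact this
  have hmemW : X ^ α * Y ^ β * X ^ γ * Y ^ δ ∈ Subgroup.zpowers N :=
    (QuotientGroup.eq_one_iff _).mp hw
  have hN2 : N * N = 1 := by
    apply Subtype.ext
    rw [Matrix.SpecialLinearGroup.coe_mul]
    show (-1 : Matrix (Fin 2) (Fin 2) A) * (-1) = 1
    rw [neg_one_mul, neg_neg]
  have hWcases : X ^ α * Y ^ β * X ^ γ * Y ^ δ = 1 ∨ X ^ α * Y ^ β * X ^ γ * Y ^ δ = N := by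
    obtain ⟨k, hk⟩ := Subgroup.mem_zpowers_iff.mp hmemW
    have h2 : N ^ (2:ℤ) = 1 := by rw [zpow_two]; exact hN2
    rcases Int.even_or_odd k with ⟨m, hm⟩ | ⟨m, hm⟩
    · left
      rw [← hk, hm, ← two_mul, _root_.zpow_mul, h2, _root_.one_zpow]
    · right
      rw [← hk, hm, _root_.zpow_add, _root_.zpow_mul, h2, _root_.one_zpow, one_mul, zpow_one]
  -- translate to matrices
  set AA := (α:ℝ) * a with hAA
  set BB := (β:ℝ) * b with hBB
  set CC := (γ:ℝ) * a with hCC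
  set DD := (δ:ℝ) * b with hDD
  have hval : ((X ^ α * Y ^ β * X ^ γ * Y ^ δ : Matrix.SpecialLinearGroup (Fin 2) A) :
      Matrix (Fin 2) (Fin 2) A) = Rm f AA * Sm f u v BB * Rm f CC * Sm f u v DD := by
    rw [Matrix.SpecialLinearGroup.coe_mul, Matrix.SpecialLinearGroup.coe_mul,
      Matrix.SpecialLinearGroup.coe_mul, Matrix.SpecialLinearGroup.coe_pow,
      Matrix.SpecialLinearGroup.coe_pow, Matrix.SpecialLinearGroup.coe_pow,
      Matrix.SpecialLinearGroup.coe_pow]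
    show (Rm f a) ^ α * (Sm f u v b) ^ β * (Rm f a) ^ γ * (Sm f u v b) ^ δ = _
    rw [Rm_pow, Sm_pow f u v huv, Rm_pow, Sm_pow f u v huv]
  have hQinv : (Rm f CC * Sm f u v DD) * (Sm f u v (-DD) * Rm f (-CC)) = 1 := by
    rw [mul_assoc, ← mul_assoc (Sm f u v DD), Sm_mul f u v huv, add_neg_cancel, Sm_zero,
      one_mul, Rm_mul, add_neg_cancel, Rm_zero]
  have hsgn : Rm f AA * Sm f u v BB = Sm f u v (-DD) * Rm f (-CC) ∨
      Rm f AA * Sm f u v BB = -(Sm f u v (-DD) * Rm f (-CC)) := by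
    rcases hWcases with hW | hW
    · left
      have h1 : Rm f AA * Sm f u v BB * Rm f CC * Sm f u v DD = 1 := by
        rw [← hval, hW, Matrix.SpecialLinearGroup.coe_one]
      calc Rm f AA * Sm f u v BB
          = (Rm f AA * Sm f u v BB * Rm f CC * Sm f u v DD) *
            (Sm f u v (-DD) * Rm f (-CC)) := by
            rw [mul_assoc (Rm f AA * Sm f u v BB * Rm f CC), mul_assoc (Rm f AA * Sm f u v BB),
              ← mul_assoc (Rm f CC)]
            rw [hQinv, mul_one]
        _ = Sm f u v (-DD) * Rm f (-CC) := by rw [h1, one_mul]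
    · right
      have h1 : Rm f AA * Sm f u v BB * Rm f CC * Sm f u v DD = -1 := by
        rw [← hval, hW]
      calc Rm f AA * Sm f u v BB
          = (Rm f AA * Sm f u v BB * Rm f CC * Sm f u v DD) *
            (Sm f u v (-DD) * Rm f (-CC)) := by
            rw [mul_assoc (Rm f AA * Sm f u v BB * Rm f CC), mul_assoc (Rm f AA * Sm f u v BB),
              ← mul_assoc (Rm f CC)]
            rw [hQinv, mul_one]
        _ = -(Sm f u v (-DD) * Rm f (-CC)) := by rw [h1, neg_one_mul]
  -- real-number bounds
  have hca3 : a ≤ π/3 := by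
    rw [ha_def]; apply div_le_div_of_nonneg_left hπ.le (by norm_num); exact_mod_cast hp
  have hcb3 : b ≤ π/3 := by
    rw [hb_def]; apply div_le_div_of_nonneg_left hπ.le (by norm_num); exact_mod_cast hq
  have ha0 : 0 < a := by positivity
  have hb0 : 0 < b := by positivity
  have hcast : ∀ (n m : ℕ), 3 ≤ m → 1 ≤ n → n ≤ m - 1 → (1:ℝ) ≤ (n:ℝ) ∧ (n:ℝ) ≤ (m:ℝ) - 1 := by
    intro n m h3 h1 h2
    constructor
    · exact_mod_cast h1
    · have : (n:ℝ) ≤ ((m-1:ℕ):ℝ) := by exact_mod_cast h2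
      rw [Nat.cast_sub (by omega)] at this; simpa using this
  obtain ⟨hα1, hαp⟩ := hcast α p hp hα hα'
  obtain ⟨hγ1, hγp⟩ := hcast γ p hp hγ hγ'
  obtain ⟨hβ1, hβq⟩ := hcast β q hq hβ hβ'
  obtain ⟨hδ1, hδq⟩ := hcast δ q hq hδ hδ'
  have hAA1 : a ≤ AA := by rw [hAA]; nlinarith
  have hAA2 : AA ≤ π - a := by rw [hAA]; nlinarith
  have hCC1 : a ≤ CC := by rw [hCC]; nlinarith
  have hCC2 : CC ≤ π - a := by rw [hCC]; nlinarith
  have hBB1 : b ≤ BB := by rw [hBB]; nlinarith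
  have hBB2 : BB ≤ π - b := by rw [hBB]; nlinarith
  have hDD1 : b ≤ DD := by rw [hDD]; nlinarith
  have hDD2 : DD ≤ π - b := by rw [hDD]; nlinarith
  have hsA : 0 < Real.sin AA := Real.sin_pos_of_pos_of_lt_pi (by linarith) (by linarith)
  have hsB : 0 < Real.sin BB := Real.sin_pos_of_pos_of_lt_pi (by linarith) (by linarith)
  have hsC : 0 < Real.sin CC := Real.sin_pos_of_pos_of_lt_pi (by linarith) (by linarith)
  have hsD : 0 < Real.sin DD := Real.sin_pos_of_pos_of_lt_pi (by linarith) (by linarith)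
  -- literal form of the right-hand side matrix
  have hQ : Sm f u v (-DD) * Rm f (-CC) =
      !![f (Real.cos DD) * f (Real.cos CC) - u * (f (Real.sin DD) * f (Real.sin CC)),
         -(f (Real.cos DD) * f (Real.sin CC)) - u * (f (Real.sin DD) * f (Real.cos CC));
         v * (f (Real.sin DD) * f (Real.cos CC)) + f (Real.cos DD) * f (Real.sin CC),
         f (Real.cos DD) * f (Real.cos CC) - v * (f (Real.sin DD) * f (Real.sin CC))] := by
    rw [SR_mul]
    ext i j
    fin_cases i <;> fin_cases j <;>
      simp [Real.sin_neg, Real.cos_neg] <;> ring1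
  -- rule out the `+1` case
  have hmain : Rm f AA * Sm f u v BB = -(Sm f u v (-DD) * Rm f (-CC)) := by
    rcases hsgn with hcase | hcase
    · exfalso
      rw [RS_mul, hQ] at hcase
      have E00 := congrFun (congrFun hcase 0) 0
      have E11 := congrFun (congrFun hcase 1) 1
      simp only [Matrix.cons_val', Matrix.cons_val_zero, Matrix.cons_val_one, Matrix.head_cons,
        Matrix.head_fin_const, Matrix.empty_val', Matrix.cons_val_fin_one,
        Matrix.of_apply] at E00 E11
      have k1 : (u - v) * f (Real.sin AA * Real.sin BB)
          = (u - v) * f (-(Real.sin CC * Real.sin DD)) := by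
        rw [_root_.map_mul, map_neg, _root_.map_mul]
        linear_combination E00 - E11
      have r1 := hcancel _ _ k1
      nlinarith [mul_pos hsA hsB, mul_pos hsC hsD]
    · exact hcase
  rw [RS_mul, hQ] at hmain
  have E00 := congrFun (congrFun hmain 0) 0
  have E01 := congrFun (congrFun hmain 0) 1
  have E10 := congrFun (congrFun hmain 1) 0
  have E11 := congrFun (congrFun hmain 1) 1
  simp only [Matrix.cons_val', Matrix.cons_val_zero, Matrix.cons_val_one, Matrix.head_cons,
    Matrix.head_fin_const, Matrix.empty_val', Matrix.cons_val_fin_one, Matrix.of_apply,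
    Matrix.neg_apply] at E00 E01 E10 E11
  -- first consequences
  have k1 : (u - v) * f (Real.sin AA * Real.sin BB)
      = (u - v) * f (Real.sin CC * Real.sin DD) := by
    rw [_root_.map_mul, _root_.map_mul]
    linear_combination E00 - E11
  have r1 := hcancel _ _ k1
  have k2 : (u - v) * f (Real.cos AA * Real.sin BB)
      = (u - v) * f (Real.cos CC * Real.sin DD) := by
    rw [_root_.map_mul, _root_.map_mul]
    linear_combination E01 + E10
  have r2 := hcancel _ _ k2
  -- deduce CC = AA
  have r3 : (Real.sin CC * Real.cos AA - Real.cos CC * Real.sin AA) * Real.sin DD = 0 := by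
    linear_combination Real.sin AA * r2 - Real.cos AA * r1
  have r4 : Real.sin (CC - AA) = 0 := by
    rw [Real.sin_sub]
    rcases mul_eq_zero.mp r3 with h' | h'
    · exact h'
    · exact absurd h' hsD.ne'
  have hCA : CC = AA := by
    have := (Real.sin_eq_zero_iff_of_lt_of_lt (x := CC - AA)
      (by linarith) (by linarith)).mp r4
    linarith
  have hγα : γ = α := by
    have h2 : (γ:ℝ) * a = (α:ℝ) * a := by rw [← hCC, ← hAA]; exact hCA
    have := mul_right_cancel₀ (ne_of_gt ha0) h2
    exact_mod_cast this
  -- deduce sin DD = sin BB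
  have hsCA : Real.sin CC = Real.sin AA := by rw [hCA]
  have hsd : Real.sin DD = Real.sin BB := by
    have h2 : Real.sin AA * Real.sin BB = Real.sin AA * Real.sin DD := by
      rw [r1, hsCA]
    exact (mul_left_cancel₀ hsA.ne' h2).symm
  -- deduce DD = BB
  rw [hCA] at E01
  rw [hsd] at E01
  have k3 : f (Real.sin AA * Real.cos BB) = f (Real.sin AA * Real.cos DD) := by
    rw [_root_.map_mul, _root_.map_mul]
    linear_combination E01
  have r5 := hinj k3
  have r6 : Real.cos BB = Real.cos DD := mul_left_cancel₀ hsA.ne' r5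
  have hBD : BB = DD := by
    apply Real.injOn_cos ⟨by linarith, by linarith⟩ ⟨by linarith, by linarith⟩ r6
  have hδβ : δ = β := by
    have h2 : (δ:ℝ) * b = (β:ℝ) * b := by rw [← hDD, ← hBB]; exact hBD.symm
    have := mul_right_cancel₀ (ne_of_gt hb0) h2
    exact_mod_cast this
  -- the final trigonometric identity
  rw [hCA, ← hBD] at E00
  have hsum' : (u + v) * (f (Real.sin a) * f (Real.sin b))
      = 2 * (f (Real.cos a) * f (Real.cos b)) := by
    rw [← _root_.map_mul, ← _root_.map_mul]; exact hsum
  have k4 : (u + v) * (f (Real.sin AA) * f (Real.sin BB))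
      = 2 * (f (Real.cos AA) * f (Real.cos BB)) := by
    linear_combination -E00
  have k5 : f (Real.cos AA) * f (Real.cos BB) * (f (Real.sin a) * f (Real.sin b)) * 2
      = f (Real.cos a) * f (Real.cos b) * (f (Real.sin AA) * f (Real.sin BB)) * 2 := by
    linear_combination f (Real.sin AA) * f (Real.sin BB) * hsum'
      - f (Real.sin a) * f (Real.sin b) * k4
  have k6 : f (Real.cos AA * Real.cos BB * (Real.sin a * Real.sin b) * 2)
      = f (Real.cos a * Real.cos b * (Real.sin AA * Real.sin BB) * 2) := by
    rw [_root_.map_mul, _root_.map_mul, _root_.map_mul, _root_.map_mul, _root_.map_mul,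
      _root_.map_mul, _root_.map_mul, _root_.map_mul, map_ofNat]
    linear_combination k5
  have r7 := hinj k6
  have hre : Real.cos ((α:ℝ) * (π/(p:ℝ))) * Real.cos ((β:ℝ) * (π/(q:ℝ)))
      * (Real.sin (π/(p:ℝ)) * Real.sin (π/(q:ℝ)))
      = Real.cos (π/(p:ℝ)) * Real.cos (π/(q:ℝ))
      * (Real.sin ((α:ℝ) * (π/(p:ℝ))) * Real.sin ((β:ℝ) * (π/(q:ℝ)))) := by
    rw [← ha_def, ← hb_def, ← hAA, ← hBB]
    linarith
  rcases trig_final' p q α β hp hq hα hα' hβ hβ' hre with ⟨h1, h2⟩ | ⟨h1, h2⟩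
  · exact Or.inl ⟨h1, h2, hγα ▸ h1, hδβ ▸ h2⟩
  · exact Or.inr ⟨h1, hγα ▸ h1, h2, hδβ ▸ h2⟩

open DualNumber in
lemma inst_dual (p q : ℕ) (hp : 3 ≤ p) (hq : 3 ≤ q)
    (heq : Real.cos (π/p) * Real.cos (π/q) = Real.sin (π/p) * Real.sin (π/q))
    (α β γ δ : ℕ)
    (hα : 1 ≤ α) (hα' : α ≤ p - 1) (hγ : 1 ≤ γ) (hγ' : γ ≤ p - 1)
    (hβ : 1 ≤ β) (hβ' : β ≤ q - 1) (hδ : 1 ≤ δ) (hδ' : δ ≤ q - 1)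
    (h : (PresentedGroup.of (rels := triangleRels p q) true) ^ α *
         (PresentedGroup.of (rels := triangleRels p q) false) ^ β *
         (PresentedGroup.of (rels := triangleRels p q) true) ^ γ *
         (PresentedGroup.of (rels := triangleRels p q) false) ^ δ = 1) :
    (α = 1 ∧ β = 1 ∧ γ = 1 ∧ δ = 1) ∨
      (α = p - 1 ∧ γ = p - 1 ∧ β = q - 1 ∧ δ = q - 1) := by
  refine core (A := DualNumber ℝ) (TrivSqZeroExt.inlHom ℝ ℝ) TrivSqZeroExt.inl_injective
    (1 + ε) (1 - ε) ?_ p q hp hq ?_ ?_ α β γ δ hα hα' hγ hγ' hβ hβ' hδ hδ' h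
  · linear_combination -(DualNumber.eps_mul_eps (R := ℝ))
  · have : (TrivSqZeroExt.inlHom ℝ ℝ) (Real.sin (π/p) * Real.sin (π/q))
        = (TrivSqZeroExt.inlHom ℝ ℝ) (Real.cos (π/p) * Real.cos (π/q)) := by rw [heq]
    rw [this]; ring
  · intro r s hrs
    have h2 : ((1:DualNumber ℝ) + ε - (1 - ε)) = 2 * ε := by ring
    rw [h2] at hrs
    have := congrArg TrivSqZeroExt.snd hrs
    simp [DualNumber.snd_mul, TrivSqZeroExt.snd_mul, TrivSqZeroExt.fst_mul] at this
    rcases this with h' | h'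
    · exact h'
    · exfalso
      have h2 : TrivSqZeroExt.fst (2 : DualNumber ℝ) = 2 := rfl
      rw [h2] at h'
      norm_num at h'

lemma inst_complex (p q : ℕ) (hp : 3 ≤ p) (hq : 3 ≤ q)
    (hne : Real.cos (π/p) * Real.cos (π/q) ≠ Real.sin (π/p) * Real.sin (π/q))
    (α β γ δ : ℕ)
    (hα : 1 ≤ α) (hα' : α ≤ p - 1) (hγ : 1 ≤ γ) (hγ' : γ ≤ p - 1)
    (hβ : 1 ≤ β) (hβ' : β ≤ q - 1) (hδ : 1 ≤ δ) (hδ' : δ ≤ q - 1)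
    (h : (PresentedGroup.of (rels := triangleRels p q) true) ^ α *
         (PresentedGroup.of (rels := triangleRels p q) false) ^ β *
         (PresentedGroup.of (rels := triangleRels p q) true) ^ γ *
         (PresentedGroup.of (rels := triangleRels p q) false) ^ δ = 1) :
    (α = 1 ∧ β = 1 ∧ γ = 1 ∧ δ = 1) ∨
      (α = p - 1 ∧ γ = p - 1 ∧ β = q - 1 ∧ δ = q - 1) := by
  have hπ := Real.pi_pos
  set c := Real.cos (π/p) * Real.cos (π/q) with hc_def
  set s := Real.sin (π/p) * Real.sin (π/q) with hs_def
  have hp0 : (0:ℝ) < p := by positivity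
  have hq0 : (0:ℝ) < q := by positivity
  have hap : π/(p:ℝ) ≤ π/3 := by
    apply div_le_div_of_nonneg_left hπ.le (by norm_num); exact_mod_cast hp
  have haq : π/(q:ℝ) ≤ π/3 := by
    apply div_le_div_of_nonneg_left hπ.le (by norm_num); exact_mod_cast hq
  have hap0 : 0 < π/(p:ℝ) := by positivity
  have haq0 : 0 < π/(q:ℝ) := by positivity
  have hs0 : 0 < s := by
    apply mul_pos <;> exact Real.sin_pos_of_pos_of_lt_pi (by linarith) (by linarith)
  have hc0 : 0 < c := by
    apply mul_pos <;> exact Real.cos_pos_of_mem_Ioo ⟨by linarith, by linarith⟩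
  set K : ℝ := c / s with hK_def
  have hKs : K * s = c := by rw [hK_def]; exact div_mul_cancel₀ c hs0.ne'
  have hK0 : 0 < K := by positivity
  have hK1 : K ≠ 1 := by
    intro hK
    rw [hK, one_mul] at hKs
    exact hne (hKs.symm ▸ rfl)
  obtain ⟨d, hd2, hdne⟩ : ∃ d : ℂ, d^2 = (K:ℂ)^2 - 1 ∧ d ≠ 0 := by
    rcases lt_or_gt_of_ne hK1 with hlt | hgt
    · refine ⟨Complex.I * (Real.sqrt (1 - K^2) : ℂ), ?_, ?_⟩
      · rw [mul_pow, Complex.I_sq, ← Complex.ofReal_pow, Real.sq_sqrt (by nlinarith)]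
        push_cast; ring
      · refine mul_ne_zero Complex.I_ne_zero ?_
        rw [Complex.ofReal_ne_zero]
        exact (Real.sqrt_pos.mpr (by nlinarith)).ne'
    · refine ⟨(Real.sqrt (K^2 - 1) : ℂ), ?_, ?_⟩
      · rw [← Complex.ofReal_pow, Real.sq_sqrt (by nlinarith)]
        push_cast; ring
      · rw [Complex.ofReal_ne_zero]
        have : 0 < Real.sqrt (K^2 - 1) := Real.sqrt_pos.mpr (by nlinarith)
        exact this.ne'
  have hKc : ((K:ℂ)) * (s:ℂ) = (c:ℂ) := by exact_mod_cast congrArg Complex.ofReal hKs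
  refine core (A := ℂ) Complex.ofRealHom Complex.ofReal_injective
    ((K:ℂ) + d) ((K:ℂ) - d) ?_ p q hp hq ?_ ?_ α β γ δ hα hα' hγ hγ' hβ hβ' hδ hδ' h
  · linear_combination -hd2
  · show ((K:ℂ) + d + ((K:ℂ) - d)) * (s:ℂ) = 2 * (c:ℂ)
    linear_combination 2 * hKc
  · intro r t hrt
    have h2 : ((K:ℂ) + d - ((K:ℂ) - d)) = 2 * d := by ring
    rw [h2] at hrt
    have h2d : (2 * d : ℂ) ≠ 0 := mul_ne_zero two_ne_zero hdne
    have := mul_left_cancel₀ h2d hrt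
    simpa using this


/-- In the triangle group `H = ⟨x, y | x^p, y^q, (xy)²⟩` (`p, q ≥ 2`), if
`x^α y^β x^γ y^δ = 1` with `α, γ ∈ {1, …, p-1}` and `β, δ ∈ {1, …, q-1}`, then either
`2 ∈ {p, q}`, or `α = β = γ = δ = 1`, or `α = γ = p-1` and `β = δ = q-1`. -/
theorem triangle_group_trivial_word (p q : ℕ) (hp : 2 ≤ p) (hq : 2 ≤ q)
    (α β γ δ : ℕ)
    (hα : 1 ≤ α) (hα' : α ≤ p - 1) (hγ : 1 ≤ γ) (hγ' : γ ≤ p - 1)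
    (hβ : 1 ≤ β) (hβ' : β ≤ q - 1) (hδ : 1 ≤ δ) (hδ' : δ ≤ q - 1)
    (h : (PresentedGroup.of (rels := triangleRels p q) true) ^ α *
         (PresentedGroup.of (rels := triangleRels p q) false) ^ β *
         (PresentedGroup.of (rels := triangleRels p q) true) ^ γ *
         (PresentedGroup.of (rels := triangleRels p q) false) ^ δ = 1) :
    p = 2 ∨ q = 2 ∨ (α = 1 ∧ β = 1 ∧ γ = 1 ∧ δ = 1) ∨
      (α = p - 1 ∧ γ = p - 1 ∧ β = q - 1 ∧ δ = q - 1) := by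
  by_cases hp2 : p = 2
  · exact Or.inl hp2
  by_cases hq2 : q = 2
  · exact Or.inr (Or.inl hq2)
  have hp3 : 3 ≤ p := by omega
  have hq3 : 3 ≤ q := by omega
  by_cases heq : Real.cos (π/p) * Real.cos (π/q) = Real.sin (π/p) * Real.sin (π/q)
  · rcases inst_dual p q hp3 hq3 heq α β γ δ hα hα' hγ hγ' hβ hβ' hδ hδ' h with h' | h'
    · exact Or.inr (Or.inr (Or.inl h'))
    · exact Or.inr (Or.inr (Or.inr h'))
  · rcases inst_complex p q hp3 hq3 heq α β γ δ hα hα' hγ hγ' hβ hβ' hδ hδ' h with h' | h'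
    · exact Or.inr (Or.inr (Or.inl h'))
    · exact Or.inr (Or.inr (Or.inr h'))
end

section
/- Let W be a cyclically reduced word of length 2m (m ≥ 1) in the free product G₁ ∗ G₂, and let X be a reduced word of length m such that both X and X⁻¹ appear as cyclic subwords of W. Then X contains a letter of order 2. -/
namespace FreeProductWords

/- Words in the free product `G₁ ∗ G₂` of the two groups `G true` and `G false`:
a word is a list of letters, a letter being (a nontrivial element of) one of the factors. -/
variable {G : Bool → Type*} [∀ i, Group (G i)]

/-- A reduced word: every letter is nontrivial and consecutive letters lie in
different factors. -/
def Reduced (W : List (Σ i, G i)) : Prop :=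
  (∀ x ∈ W, x.2 ≠ 1) ∧ W.Chain' fun u v => u.1 ≠ v.1

/-- A cyclically reduced word: reduced, and moreover of length at most 1 or with first and
last letters in different factors. -/
def CyclicallyReduced (W : List (Σ i, G i)) : Prop :=
  Reduced W ∧ (W.length ≤ 1 ∨ ∀ x ∈ W.head?, ∀ y ∈ W.getLast?, x.1 ≠ y.1)

/-- The inverse word `X⁻¹ = x_m⁻¹ ⋯ x₂⁻¹ x₁⁻¹` of the word `X = x₁x₂⋯x_m`. -/
def invWord (X : List (Σ i, G i)) : List (Σ i, G i) :=
  (X.map fun x => ⟨x.1, x.2⁻¹⟩).reverse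

/-- `X` is a cyclic subword of `W`: a word of consecutive letters of some cyclic
permutation of `W`. -/
def IsCyclicSubword (X W : List (Σ i, G i)) : Prop :=
  ∃ j, X <+: W.rotate j

/-- Let `W` be a cyclically reduced word of length `2m` (`m ≥ 1`) in the free product
`G₁ ∗ G₂`, and let `X` be a reduced word of length `m` such that both `X` and `X⁻¹` appear
as cyclic subwords of `W`.  Then `X` contains a letter of order 2. -/
theorem exists_orderTwo_letter_of_cyclic_subwords (m : ℕ) (hm : 1 ≤ m)
    (W X : List (Σ i, G i))
    (hW : CyclicallyReduced W) (hWlen : W.length = 2 * m)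
    (hX : Reduced X) (hXlen : X.length = m)
    (h₁ : IsCyclicSubword X W) (h₂ : IsCyclicSubword (invWord X) W) :
    ∃ x ∈ X, orderOf x.2 = 2 := by
  obtain ⟨⟨hW1, hW2⟩, hWc⟩ := hW
  set n := W.length with hn
  have hn2 : n = 2 * m := hWlen
  have hnpos : 0 < n := by omega
  have hWget : ∀ p : ℕ, p % n < n := fun p => Nat.mod_lt _ hnpos
  obtain ⟨j, hj⟩ := h₁
  obtain ⟨k, hk⟩ := h₂
  set w : ℕ → (Σ i, G i) := fun p => W[p % n]'(hWget p) with hw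
  have wcongr : ∀ p q : ℕ, p % n = q % n → w p = w q := by
    intro p q h
    simp only [hw]
    congr 1
  -- X's letters inside W
  have hA : ∀ i (hi : i < m), X[i]'(by omega) = w (i + j) := by
    intro i hi
    have h1 := hj.getElem (i := i) (by omega)
    rw [List.getElem_rotate] at h1
    simpa [hw, hn] using h1
  -- invWord X's letters inside W
  have hC : ∀ i (hi : i < m),
      w ((m - 1 - i) + k) = ⟨(w (i + j)).1, (w (i + j)).2⁻¹⟩ := by
    intro i hi
    have hIlen : (invWord X).length = m := by simp [invWord, hXlen]
    have h1 := hk.getElem (i := m - 1 - i) (by omega)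
    rw [List.getElem_rotate] at h1
    have hidx : X.length - 1 - (m - 1 - i) = i := by omega
    have h2 : (invWord X)[m - 1 - i]'(by omega)
        = (⟨(X[i]'(by omega)).1, (X[i]'(by omega)).2⁻¹⟩ : Σ i, G i) := by
      simp only [invWord, List.getElem_reverse, List.length_map, List.getElem_map, hidx]
    rw [h2] at h1
    rw [hA i hi] at h1
    simp only [← hn] at h1
    simp only [hw]
    exact h1.symm
  -- alternation of factors
  have hstep : ∀ p : ℕ, (w (p + 1)).1 ≠ (w p).1 := by
    intro p
    have hr : p % n < n := hWget p
    have h1n : (1 : ℕ) % n = 1 := Nat.mod_eq_of_lt (by omega)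
    have hmod : (p + 1) % n = (p % n + 1) % n := by
      rw [Nat.add_mod, h1n]
    rcases Nat.lt_or_ge (p % n + 1) n with hlt | hge
    · have : (p + 1) % n = p % n + 1 := by rw [hmod, Nat.mod_eq_of_lt hlt]
      simp only [hw, this]
      have := List.isChain_iff_getElem.mp hW2 (p % n) (by omega)
      exact fun h => this h.symm
    · have hend : p % n + 1 = n := by omega
      have h0 : (p + 1) % n = 0 := by rw [hmod, hend, Nat.mod_self]
      have hne : W ≠ [] := List.ne_nil_of_length_pos (by omega)
      rcases hWc with h | hWc
      · omega
      have hh : W.head? = some (W.head hne) := List.head?_eq_head hne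
      have hl : W.getLast? = some (W.getLast hne) := List.getLast?_eq_getLast hne
      have hne2 := hWc (W.head hne) (by rw [hh]; rfl) (W.getLast hne) (by rw [hl]; rfl)
      rw [List.head_eq_getElem_zero, List.getLast_eq_getElem] at hne2
      have e1 : w p = W[W.length - 1]'(by omega) := by
        simp only [hw]
        congr 1
        omega
      have e2 : w (p + 1) = W[0]'(by omega) := by
        simp only [hw]
        congr 1
      rw [e1, e2]
      exact hne2
  have hb2 : ∀ p : ℕ, (w (p + 2)).1 = (w p).1 := by
    intro p
    have h1 := hstep (p + 1)
    have h2 := hstep p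
    revert h1 h2
    cases (w (p + 2)).1 <;> cases (w (p + 1)).1 <;> cases (w p).1 <;> simp
  have hstep2 : ∀ d p : ℕ, (w (p + 2 * d)).1 = (w p).1 := by
    intro d
    induction d with
    | zero => simp
    | succ d ih =>
      intro p
      have : p + 2 * (d + 1) = (p + 2) + 2 * d := by ring
      rw [this, ih, hb2]
  have hparity : ∀ p q : ℕ, (w p).1 = (w q).1 → p % 2 = q % 2 := by
    intro p q h
    have hp : (w p).1 = (w (p % 2)).1 := by
      conv_lhs => rw [show p = p % 2 + 2 * (p / 2) by omega]
      exact hstep2 _ _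
    have hq : (w q).1 = (w (q % 2)).1 := by
      conv_lhs => rw [show q = q % 2 + 2 * (q / 2) by omega]
      exact hstep2 _ _
    by_contra hne
    have h01 := hstep 0
    rcases Nat.mod_two_eq_zero_or_one p with h1 | h1 <;>
      rcases Nat.mod_two_eq_zero_or_one q with h2 | h2 <;>
      rw [h1] at hp <;> rw [h2] at hq <;> simp_all
  -- parity constraint
  have hpar : (m - 1 + k) % 2 = j % 2 := by
    have h0 := congrArg Sigma.fst (hC 0 (by omega))
    simp only [Nat.sub_zero, Nat.zero_add] at h0
    exact hparity _ _ h0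
  -- the reflection's fixed point
  set A : ℕ := k + (m - 1) + (n - j % n) with hA_def
  set t : ℕ := A % n with ht_def
  have htn : t < n := Nat.mod_lt _ hnpos
  have hjn : j % n < n := hWget j
  obtain ⟨a, ha⟩ : (n : ℤ) ∣ (A : ℤ) - (t : ℤ) :=
    Nat.modEq_iff_dvd.mp (Nat.mod_modEq A n)
  obtain ⟨b, hb⟩ : (n : ℤ) ∣ (j : ℤ) - ((j % n : ℕ) : ℤ) :=
    Nat.modEq_iff_dvd.mp (Nat.mod_modEq j n)
  have h2n : (2 : ℤ) ∣ (n : ℤ) := ⟨(m : ℤ), by exact_mod_cast hn2⟩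
  have hAcast : (A : ℤ) = (k : ℤ) + ((m : ℤ) - 1) + ((n : ℤ) - ((j % n : ℕ) : ℤ)) := by
    rw [hA_def]; push_cast [Nat.cast_sub hm, Nat.cast_sub hjn.le]; ring
  have hteven : t % 2 = 0 := by
    have h2a : (2 : ℤ) ∣ (A : ℤ) - (t : ℤ) := dvd_trans h2n ⟨a, ha⟩
    have h2b : (2 : ℤ) ∣ (j : ℤ) - ((j % n : ℕ) : ℤ) := dvd_trans h2n ⟨b, hb⟩
    omega
  set i : ℕ := t / 2 with hi_def
  have hti : t = 2 * i := by omega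
  have him : i < m := by omega
  -- the fixed point equation
  have hfix : ((m - 1 - i) + k) % n = (i + j) % n := by
    have : (m - 1 - i + k) ≡ (i + j) [MOD n] := by
      rw [Nat.modEq_iff_dvd]
      refine ⟨1 + b - a, ?_⟩
      have h1 : ((m - 1 - i : ℕ) : ℤ) = (m : ℤ) - 1 - (i : ℤ) := by
        push_cast [Nat.cast_sub (by omega : i ≤ m - 1), Nat.cast_sub hm]
        ring
      have hti' : (t : ℤ) = 2 * (i : ℤ) := by exact_mod_cast hti
      push_cast [h1]
      rw [hAcast] at ha
      linarith [ha, hb]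
    exact this
  have hkey := hC i him
  rw [wcongr _ _ hfix] at hkey
  -- extract the order-2 letter
  have hsnd : (w (i + j)).2 = (w (i + j)).2⁻¹ := by
    have := (Sigma.ext_iff.mp hkey).2
    exact eq_of_heq this
  have hmem : w (i + j) ∈ W := by
    simp only [hw]
    exact List.getElem_mem _
  have hne1 : (w (i + j)).2 ≠ 1 := hW1 _ hmem
  refine ⟨X[i]'(by omega), List.getElem_mem (by omega), ?_⟩
  rw [hA i him]
  have : Fact (Nat.Prime 2) := ⟨Nat.prime_two⟩
  refine orderOf_eq_prime ?_ hne1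
  rw [sq, mul_eq_one_iff_eq_inv]
  exact hsnd


end FreeProductWords
end
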